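/- arXiv:1405.4672 — 6 statements merged into one kernel-verified Lean document; each statement's English description precedes it below -/
import Mathlib

section
/- Suppose a polynomial f(t) with rational coefficients satisfies f(t) = c + (-1)^n f(-t-1) for constants c and integer n. Define h_i by sum_{i=0}^n h_i t^i = (1-t)^n f(t/(1-t)). Then h_i - h_{n-i} = (-1)^i * binomial(n,i) * c for all 0 <= i <= n, provided deg f <= n. -/
open Polynomial Finset

lemma coeff_one_sub_X_pow_aux (m k : ℕ) :
    ((1 - X : ℚ[X]) ^ m).coeff k = (-1 : ℚ) ^ k * m.choose k := by
  have h1 : (1 - X : ℚ[X]) ^ m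
      = ∑ j ∈ range (m + 1), C ((-1 : ℚ) ^ j * m.choose j) * X ^ j := by
    rw [sub_eq_add_neg, add_comm, add_pow]
    refine Finset.sum_congr rfl fun j hj => ?_
    rw [neg_pow, one_pow, mul_one]
    simp [mul_comm, mul_assoc, mul_left_comm]
  rw [h1, finset_sum_coeff]
  simp only [coeff_C_mul, coeff_X_pow, mul_ite, mul_one, mul_zero]
  rw [Finset.sum_ite_eq (range (m + 1)) k]
  by_cases hk : k ≤ m
  · simp [Nat.lt_succ_of_le hk]
  · have h2 : ¬ k < m + 1 := by omega
    simp [h2, Nat.choose_eq_zero_of_lt (by omega : m < k)]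

lemma coeff_X_sub_one_pow_aux (m k : ℕ) :
    ((X - 1 : ℚ[X]) ^ m).coeff k = (-1 : ℚ) ^ m * (-1 : ℚ) ^ k * m.choose k := by
  have : (X - 1 : ℚ[X]) ^ m = C ((-1 : ℚ) ^ m) * (1 - X) ^ m := by
    rw [← neg_sub, neg_pow]
    simp [C_pow]
  rw [this, coeff_C_mul, coeff_one_sub_X_pow_aux]
  ring

/-- Abstract Dehn–Sommerville relations: if a polynomial `f` of degree at most `n`
satisfies `f(t) = c + (-1)^n f(-t-1)`, and the `h`-numbers are defined by
`∑ h_i t^i = ∑ f.coeff i * t^i * (1-t)^(n-i)` (equivalently `(1-t)^n f(t/(1-t))`),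
then `h_i - h_{n-i} = (-1)^i * (n choose i) * c` for all `0 ≤ i ≤ n`. -/
theorem abstract_dehn_sommerville (n : ℕ) (f : Polynomial ℚ) (c : ℚ)
    (hdeg : f.natDegree ≤ n)
    (hfe : f = C c + C ((-1 : ℚ) ^ n) * f.comp (-X - 1))
    (h : ℕ → ℚ)
    (hdef : ∑ i ∈ range (n + 1), C (h i) * X ^ i
      = ∑ i ∈ range (n + 1), C (f.coeff i) * X ^ i * (1 - X) ^ (n - i)) :
    ∀ i ≤ n, h i - h (n - i) = (-1 : ℚ) ^ i * (n.choose i : ℚ) * c := by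
  -- The key evaluation identity, valid for all `x ≠ 1`.
  have key : ∀ x : ℚ, x ≠ 1 →
      ∑ j ∈ range (n + 1), f.coeff j * x ^ j * (1 - x) ^ (n - j)
        = c * (1 - x) ^ n + ∑ j ∈ range (n + 1), f.coeff j * (x - 1) ^ (n - j) := by
    intro x hx
    have hu : (1 - x) ≠ 0 := sub_ne_zero.mpr (Ne.symm hx)
    have hv : (x - 1) ≠ 0 := sub_ne_zero.mpr hx
    set y : ℚ := x / (1 - x) with hy
    set z : ℚ := (x - 1)⁻¹ with hzdef
    have hz : -y - 1 = z := by
      rw [hy, hzdef]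
      field_simp
      ring
    have hfy : eval y f = c + (-1 : ℚ) ^ n * eval z f := by
      conv_lhs => rw [hfe]
      simp [eval_comp, hz]
    have e1 : eval y f = ∑ j ∈ range (n + 1), f.coeff j * y ^ j :=
      eval_eq_sum_range' (Nat.lt_succ_of_le hdeg) y
    have e2 : eval z f = ∑ j ∈ range (n + 1), f.coeff j * z ^ j :=
      eval_eq_sum_range' (Nat.lt_succ_of_le hdeg) z
    have t1 : ∀ j ∈ range (n + 1),
        f.coeff j * y ^ j * (1 - x) ^ n = f.coeff j * x ^ j * (1 - x) ^ (n - j) := by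
      intro j hj
      rw [Finset.mem_range] at hj
      have hsplit : (1 - x) ^ n = (1 - x) ^ j * (1 - x) ^ (n - j) := by
        rw [← pow_add, Nat.add_sub_cancel' (by omega)]
      rw [hsplit, hy, div_pow, mul_assoc, ← mul_assoc (x ^ j / (1 - x) ^ j),
        div_mul_cancel₀ _ (pow_ne_zero j hu), mul_assoc]
    have t2 : ∀ j ∈ range (n + 1),
        f.coeff j * z ^ j * ((-1 : ℚ) ^ n * (1 - x) ^ n)
          = f.coeff j * (x - 1) ^ (n - j) := by
      intro j hj
      rw [Finset.mem_range] at hj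
      have h1 : (-1 : ℚ) ^ n * (1 - x) ^ n = (x - 1) ^ n := by
        rw [← mul_pow]; ring_nf
      have hsplit : (x - 1) ^ n = (x - 1) ^ j * (x - 1) ^ (n - j) := by
        rw [← pow_add, Nat.add_sub_cancel' (by omega)]
      rw [h1, hsplit, hzdef, inv_pow, mul_assoc, ← mul_assoc ((x - 1) ^ j)⁻¹,
        inv_mul_cancel₀ (pow_ne_zero j hv), one_mul]
    calc ∑ j ∈ range (n + 1), f.coeff j * x ^ j * (1 - x) ^ (n - j)
        = (eval y f) * (1 - x) ^ n := by
          rw [e1, Finset.sum_mul]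
          exact (Finset.sum_congr rfl t1).symm
      _ = c * (1 - x) ^ n + (eval z f) * ((-1 : ℚ) ^ n * (1 - x) ^ n) := by
          rw [hfy]; ring
      _ = c * (1 - x) ^ n + ∑ j ∈ range (n + 1), f.coeff j * (x - 1) ^ (n - j) := by
          rw [e2, Finset.sum_mul]
          exact congrArg _ (Finset.sum_congr rfl t2)
  -- The corresponding polynomial identity, by evaluation on the infinite set `ℚ \ {1}`.
  have hPQ : (∑ i ∈ range (n + 1), C (f.coeff i) * X ^ i * (1 - X) ^ (n - i))
      = C c * (1 - X) ^ n + ∑ i ∈ range (n + 1), C (f.coeff i) * (X - 1) ^ (n - i) := by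
    apply eq_of_infinite_eval_eq
    apply Set.Infinite.mono ?_ ((Set.finite_singleton (1 : ℚ)).infinite_compl)
    intro x hx
    simp only [Set.mem_compl_iff, Set.mem_singleton_iff] at hx
    simp only [Set.mem_setOf_eq, eval_finset_sum, eval_add, eval_mul, eval_pow, eval_C,
      eval_X, eval_sub, eval_one]
    exact key x hx
  -- Extracting the `h`-numbers as coefficients.
  have hcoeff : ∀ i ≤ n, h i
      = (∑ j ∈ range (n + 1), C (f.coeff j) * X ^ j * (1 - X) ^ (n - j)).coeff i := by
    intro i hi
    have := congrArg (fun p => Polynomial.coeff p i) hdef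
    simp only [finset_sum_coeff, coeff_C_mul, coeff_X_pow, mul_ite, mul_one, mul_zero] at this
    rw [Finset.sum_ite_eq (range (n + 1)) i,
      if_pos (Finset.mem_range.mpr (Nat.lt_succ_of_le hi))] at this
    rw [finset_sum_coeff]
    exact this
  -- Reflection identity for coefficients.
  have hrefl : ∀ i ≤ n,
      (∑ j ∈ range (n + 1), C (f.coeff j) * X ^ j * (1 - X) ^ (n - j)).coeff (n - i)
        = (∑ j ∈ range (n + 1), C (f.coeff j) * (X - 1) ^ (n - j)).coeff i := by
    intro i hi
    rw [finset_sum_coeff, finset_sum_coeff]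
    refine Finset.sum_congr rfl fun j hj => ?_
    rw [Finset.mem_range] at hj
    rw [mul_right_comm, coeff_mul_X_pow', coeff_C_mul, coeff_C_mul,
      coeff_one_sub_X_pow_aux, coeff_X_sub_one_pow_aux]
    by_cases hc : j ≤ n - i
    · rw [if_pos hc]
      have h1 : (n - j).choose i = (n - j).choose (n - i - j) := by
        rw [show n - i - j = (n - j) - i by omega]
        exact (Nat.choose_symm (by omega)).symm
      have h2 : (-1 : ℚ) ^ (n - j) * (-1 : ℚ) ^ i = (-1 : ℚ) ^ (n - i - j) := by
        rw [show n - j = (n - i - j) + i by omega, pow_add, mul_assoc, ← mul_pow]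
        norm_num
      rw [h1, ← h2]
    · rw [if_neg hc, Nat.choose_eq_zero_of_lt (by omega : n - j < i)]
      simp
  -- Putting it all together.
  intro i hi
  have e1 : h i = c * ((-1 : ℚ) ^ i * n.choose i)
      + (∑ j ∈ range (n + 1), C (f.coeff j) * (X - 1) ^ (n - j)).coeff i := by
    rw [hcoeff i hi, hPQ, coeff_add, coeff_C_mul, coeff_one_sub_X_pow_aux]
  have e2 : h (n - i)
      = (∑ j ∈ range (n + 1), C (f.coeff j) * (X - 1) ^ (n - j)).coeff i := by
    rw [hcoeff (n - i) (by omega), hrefl i hi]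
  rw [e1, e2]
  ring
end

section
/- Let U be an invertible n×n matrix over a field with V = U^{-1}, and let M, N ⊆ {1,...,n} with |M| = |N| = q. Then det((V_{r,s})_{r∈M, s∈N}) = sgn_{M,N} / det(U) * det((U_{r,s})_{r∈[n]\N, s∈[n]\M}), where sgn_{M,N} = (-1)^{Σ_{r∈[n]\N} r + Σ_{s∈[n]\M} s} (Jacobi's identity on complementary minors). -/
open Finset Matrix Equiv

set_option maxHeartbeats 1600000


namespace JacobiAux

lemma strictMono_le_apply {a b : ℕ} {f : Fin a → Fin b} (hf : StrictMono f) (i : Fin a) :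
    (i : ℕ) ≤ (f i : ℕ) := by
  obtain ⟨i, hi⟩ := i
  induction i with
  | zero => exact Nat.zero_le _
  | succ j ih =>
    have h1 : (f ⟨j, by omega⟩ : ℕ) < (f ⟨j + 1, hi⟩ : ℕ) :=
      hf (show (⟨j, by omega⟩ : Fin a) < ⟨j + 1, hi⟩ from by simp [Fin.mk_lt_mk])
    have h2 : ((⟨j, by omega⟩ : Fin a) : ℕ) ≤ (f ⟨j, by omega⟩ : ℕ) := ih (by omega)
    simp only [Fin.val_mk] at h2 ⊢
    omega

variable {n q : ℕ}

lemma card_le_n (M : Finset (Fin n)) (hM : M.card = q) : q ≤ n := by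
  rw [← hM]
  simpa using M.card_le_univ

/-- The equivalence juxtaposing the sorted elements of `M` and of `Mᶜ`. -/
noncomputable def shuffleEquiv (M : Finset (Fin n)) (hM : M.card = q) (hMc : Mᶜ.card = n - q) :
    Fin q ⊕ Fin (n - q) ≃ Fin n :=
  Equiv.ofBijective
    (Sum.elim (fun i => M.orderEmbOfFin hM i) (fun j => Mᶜ.orderEmbOfFin hMc j)) (by
      rw [Fintype.bijective_iff_injective_and_card]
      constructor
      · rintro (i | i) (j | j) h <;> simp only [Sum.elim_inl, Sum.elim_inr] at h
        · simp [(M.orderEmbOfFin hM).injective h]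
        · have h1 := Mᶜ.orderEmbOfFin_mem hMc j
          rw [Finset.mem_compl] at h1
          exact absurd (h ▸ M.orderEmbOfFin_mem hM i) h1
        · have h1 := Mᶜ.orderEmbOfFin_mem hMc i
          rw [Finset.mem_compl] at h1
          exact absurd (h.symm ▸ M.orderEmbOfFin_mem hM j) h1
        · simp [(Mᶜ.orderEmbOfFin hMc).injective h]
      · have := card_le_n M hM
        simp
        omega)

@[simp] lemma shuffleEquiv_inl (M : Finset (Fin n)) (hM : M.card = q) (hMc : Mᶜ.card = n - q)
    (i : Fin q) : shuffleEquiv M hM hMc (Sum.inl i) = M.orderEmbOfFin hM i := rfl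

@[simp] lemma shuffleEquiv_inr (M : Finset (Fin n)) (hM : M.card = q) (hMc : Mᶜ.card = n - q)
    (j : Fin (n - q)) : shuffleEquiv M hM hMc (Sum.inr j) = Mᶜ.orderEmbOfFin hMc j := rfl

/-- The permutation of `Fin n` whose first `q` values list `M` in order and whose
remaining values list `Mᶜ` in order. -/
noncomputable def shufflePerm (M : Finset (Fin n)) (hM : M.card = q) (hMc : Mᶜ.card = n - q) :
    Equiv.Perm (Fin n) :=
  ((finCongr (by have := card_le_n M hM; omega)).trans finSumFinEquiv.symm).trans
    (shuffleEquiv M hM hMc)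

lemma shufflePerm_apply_lt (M : Finset (Fin n)) (hM : M.card = q) (hMc : Mᶜ.card = n - q)
    (p : Fin n) (h : (p : ℕ) < q) :
    shufflePerm M hM hMc p = M.orderEmbOfFin hM ⟨p, h⟩ := by
  have hc : (finCongr (by have := card_le_n M hM; omega) p : Fin (q + (n - q)))
      = Fin.castAdd (n - q) ⟨p, h⟩ := by ext; simp
  simp only [shufflePerm, Equiv.trans_apply, hc, finSumFinEquiv_symm_apply_castAdd,
    shuffleEquiv_inl]

lemma shufflePerm_apply_ge (M : Finset (Fin n)) (hM : M.card = q) (hMc : Mᶜ.card = n - q)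
    (p : Fin n) (h : q ≤ (p : ℕ)) :
    shufflePerm M hM hMc p = Mᶜ.orderEmbOfFin hMc ⟨p - q, by have := p.isLt; omega⟩ := by
  have hc : (finCongr (by have := card_le_n M hM; omega) p : Fin (q + (n - q)))
      = Fin.natAdd q ⟨p - q, by have := p.isLt; omega⟩ := by ext; simp; omega
  simp only [shufflePerm, Equiv.trans_apply, hc, finSumFinEquiv_symm_apply_natAdd,
    shuffleEquiv_inr]


lemma min_add_le_orderEmbOfFin (M : Finset (Fin n)) (hne : M.Nonempty) (hM : M.card = q)
    (i : Fin q) : (M.min' hne : ℕ) + (i : ℕ) ≤ (M.orderEmbOfFin hM i : ℕ) := by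
  obtain ⟨i, hi⟩ := i
  induction i with
  | zero =>
    have h0 := Finset.orderEmbOfFin_zero hM (by omega)
    simp only [Fin.val_mk, Nat.add_zero]
    exact le_of_eq (congrArg Fin.val h0.symm)
  | succ j ih =>
    have h1 : (M.orderEmbOfFin hM ⟨j, by omega⟩ : ℕ) < (M.orderEmbOfFin hM ⟨j + 1, hi⟩ : ℕ) :=
      (M.orderEmbOfFin hM).strictMono (show (⟨j, by omega⟩ : Fin q) < ⟨j + 1, hi⟩ from by
        simp [Fin.mk_lt_mk])
    have h2 := ih (by omega)
    simp only [Fin.val_mk] at h2 ⊢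
    omega

/-- The `j`-th smallest element of `Mᶜ` is `j` itself, when `j` is smaller than `min M`. -/
lemma orderEmbOfFin_compl_of_lt_min (M : Finset (Fin n)) (hne : M.Nonempty)
    (hMc : Mᶜ.card = n - q) (j : Fin (n - q)) (hj : (j : ℕ) < (M.min' hne : ℕ)) :
    (Mᶜ.orderEmbOfFin hMc j : ℕ) = (j : ℕ) := by
  have hm₀n : ((M.min' hne : Fin n) : ℕ) < n := (M.min' hne).isLt
  have hmem : ∀ i : Fin n, (i : ℕ) < (M.min' hne : ℕ) → i ∈ Mᶜ := by
    intro i hi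
    rw [Finset.mem_compl]
    intro hmem
    have := M.min'_le _ hmem
    rw [Fin.le_def] at this
    omega
  refine le_antisymm ?_ (strictMono_le_apply (Mᶜ.orderEmbOfFin hMc).strictMono j)
  set e := Mᶜ.orderIsoOfFin hMc with he
  set h' : Fin ((j : ℕ) + 1) → Fin (n - q) :=
    fun i => e.symm ⟨⟨(i : ℕ), by omega⟩, hmem ⟨(i : ℕ), by omega⟩ (by simp only [Fin.val_mk]; omega)⟩ with hh'
  have hmono : StrictMono h' := by
    intro a b hab
    apply e.symm.strictMono
    simp only [Subtype.mk_lt_mk, Fin.mk_lt_mk]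
    exact hab
  have hle : (j : ℕ) ≤ (h' ⟨(j : ℕ), by omega⟩ : ℕ) := by
    have := strictMono_le_apply hmono ⟨(j : ℕ), by omega⟩
    simpa using this
  have hj' : j ≤ h' ⟨(j : ℕ), by omega⟩ := by rwa [Fin.le_def]
  have hmono2 : Mᶜ.orderEmbOfFin hMc j ≤ Mᶜ.orderEmbOfFin hMc (h' ⟨(j : ℕ), by omega⟩) :=
    (Mᶜ.orderEmbOfFin hMc).monotone hj'
  have hval : (Mᶜ.orderEmbOfFin hMc (h' ⟨(j : ℕ), by omega⟩) : ℕ) = (j : ℕ) := by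
    have : Mᶜ.orderEmbOfFin hMc (h' ⟨(j : ℕ), by omega⟩)
        = ((e (h' ⟨(j : ℕ), by omega⟩) : Fin n)) := (Mᶜ.coe_orderIsoOfFin_apply hMc _).symm
    rw [this, hh']
    simp only [OrderIso.apply_symm_apply]
  rw [Fin.le_def] at hmono2
  omega

lemma min_lt_orderEmbOfFin_compl (M : Finset (Fin n)) (hne : M.Nonempty)
    (hMc : Mᶜ.card = n - q) (j : Fin (n - q)) (hj : (M.min' hne : ℕ) ≤ (j : ℕ)) :
    (M.min' hne : ℕ) < (Mᶜ.orderEmbOfFin hMc j : ℕ) := by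
  have h1 := strictMono_le_apply (Mᶜ.orderEmbOfFin hMc).strictMono j
  have h2 : Mᶜ.orderEmbOfFin hMc j ≠ M.min' hne := by
    intro h
    have := Mᶜ.orderEmbOfFin_mem hMc j
    rw [h, Finset.mem_compl] at this
    exact this (M.min'_mem hne)
  have h3 : (Mᶜ.orderEmbOfFin hMc j : ℕ) ≠ ((M.min' hne : Fin n) : ℕ) := fun h => h2 (Fin.ext h)
  omega


lemma shufflePerm_erase {n k : ℕ} (M : Finset (Fin (n + 1))) (hne : M.Nonempty)
    (hM : M.card = k + 1) (hMc : Mᶜ.card = (n + 1) - (k + 1))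
    (hM' : (M.erase (M.min' hne)).card = k)
    (hM'c : (M.erase (M.min' hne))ᶜ.card = (n + 1) - k)
    (hK : k + (M.min' hne : ℕ) < n + 1) :
    shufflePerm (M.erase (M.min' hne)) hM' hM'c =
      shufflePerm M hM hMc * Fin.cycleRange ⟨k + (M.min' hne : ℕ), hK⟩ := by
  have hm₀M : M.min' hne ∈ M := M.min'_mem hne
  -- the erased set's order embedding
  have hA : (fun i : Fin k => M.orderEmbOfFin hM ⟨(i : ℕ) + 1, by omega⟩)
      = ⇑((M.erase (M.min' hne)).orderEmbOfFin hM') := by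
    apply Finset.orderEmbOfFin_unique
    · intro x
      rw [Finset.mem_erase]
      refine ⟨?_, M.orderEmbOfFin_mem hM _⟩
      intro h
      have h0 : M.orderEmbOfFin hM ⟨0, by omega⟩ = M.min' hne :=
        Finset.orderEmbOfFin_zero hM (by omega)
      have := (M.orderEmbOfFin hM).injective (h.trans h0.symm)
      simp [Fin.ext_iff] at this
    · intro a b hab
      exact (M.orderEmbOfFin hM).strictMono (by simp only [Fin.mk_lt_mk]; omega)
  -- the complement of the erased set's order embedding
  set m₀ := M.min' hne with hm₀def
  have hm₀n : (m₀ : ℕ) < n + 1 := m₀.isLt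
  set G : Fin ((n + 1) - k) → Fin (n + 1) := fun j =>
    if h : (j : ℕ) < (m₀ : ℕ) then ⟨(j : ℕ), by omega⟩
    else if h2 : (j : ℕ) = (m₀ : ℕ) then m₀
    else Mᶜ.orderEmbOfFin hMc ⟨(j : ℕ) - 1, by have := j.isLt; omega⟩ with hGdef
  have hGlt : ∀ (j : Fin ((n + 1) - k)) (h : (j : ℕ) < (m₀ : ℕ)),
      G j = ⟨(j : ℕ), by omega⟩ := fun j h => dif_pos h
  have hGeq : ∀ (j : Fin ((n + 1) - k)) (h : (j : ℕ) = (m₀ : ℕ)), G j = m₀ := by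
    intro j h
    rw [hGdef]
    dsimp only
    rw [dif_neg (by omega), dif_pos h]
  have hGgt : ∀ (j : Fin ((n + 1) - k)) (h : (m₀ : ℕ) < (j : ℕ)),
      G j = Mᶜ.orderEmbOfFin hMc ⟨(j : ℕ) - 1, by have := j.isLt; omega⟩ := by
    intro j h
    rw [hGdef]
    dsimp only
    rw [dif_neg (by omega), dif_neg (by omega)]
  have hGmem : ∀ x, G x ∈ (M.erase m₀)ᶜ := by
    intro x
    rw [Finset.mem_compl, Finset.mem_erase, not_and_or]
    rcases lt_trichotomy ((x : ℕ)) ((m₀ : ℕ)) with h | h | h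
    · right
      rw [hGlt x h]
      intro hmem
      have := M.min'_le _ hmem
      rw [Fin.le_def] at this
      simp only [Fin.val_mk] at this
      omega
    · left
      rw [hGeq x h]
      simp
    · right
      rw [hGgt x h]
      have := Mᶜ.orderEmbOfFin_mem hMc ⟨(x : ℕ) - 1, by have := x.isLt; omega⟩
      rwa [Finset.mem_compl] at this
  have hGmono : StrictMono G := by
    intro a b hab
    rw [Fin.lt_def] at hab
    rw [Fin.lt_def]
    rcases lt_trichotomy ((b : ℕ)) ((m₀ : ℕ)) with hb | hb | hb
    · rw [hGlt a (by omega), hGlt b hb]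
      simpa using hab
    · rw [hGeq b hb, hGlt a (by omega)]
      simp only [Fin.val_mk]
      omega
    · have hbval : (G b : ℕ) = (Mᶜ.orderEmbOfFin hMc ⟨(b : ℕ) - 1, by have := b.isLt; omega⟩ : ℕ) := by
        rw [hGgt b hb]
      have hmin := min_lt_orderEmbOfFin_compl M hne hMc ⟨(b : ℕ) - 1, by have := b.isLt; omega⟩
        (by simp only [Fin.val_mk]; omega)
      rcases lt_trichotomy ((a : ℕ)) ((m₀ : ℕ)) with ha | ha | ha
      · rw [hGlt a ha]
        simp only [Fin.val_mk]
        omega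
      · rw [hGeq a ha]
        omega
      · rw [hGgt a ha, hbval]
        have := (Mᶜ.orderEmbOfFin hMc).strictMono
          (show (⟨(a : ℕ) - 1, by have := a.isLt; omega⟩ : Fin ((n+1) - (k+1)))
            < ⟨(b : ℕ) - 1, by have := b.isLt; omega⟩ from by simp only [Fin.mk_lt_mk]; omega)
        rw [Fin.lt_def] at this
        exact this
  have hG : G = ⇑((M.erase m₀)ᶜ.orderEmbOfFin hM'c) :=
    Finset.orderEmbOfFin_unique hM'c hGmem hGmono
  -- now prove the equality of permutations
  apply Equiv.ext
  intro p
  rw [Equiv.Perm.mul_apply]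
  set K : Fin (n + 1) := ⟨k + (m₀ : ℕ), hK⟩ with hKdef
  rcases lt_trichotomy p K with hp | hp | hp
  · rw [Fin.cycleRange_of_lt hp]
    have hplt : (p : ℕ) < k + (m₀ : ℕ) := by rw [Fin.lt_def] at hp; exact hp
    have hval : ((p + 1 : Fin (n + 1)) : ℕ) = (p : ℕ) + 1 :=
      Fin.val_add_one_of_lt (lt_of_lt_of_le hp (Fin.le_last K))
    rcases lt_or_ge ((p : ℕ)) k with hpk | hpk
    · rw [shufflePerm_apply_lt _ hM' hM'c p (by omega),
        shufflePerm_apply_lt _ hM hMc (p + 1) (by omega)]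
      rw [← hA]
      simp only
      congr 1
      ext
      simp [hval]
    · rw [shufflePerm_apply_ge _ hM' hM'c p (by omega),
        shufflePerm_apply_ge _ hM hMc (p + 1) (by omega)]
      rw [← hG]
      rw [hGlt ⟨(p : ℕ) - k, by have := p.isLt; omega⟩ (by simp only [Fin.val_mk]; omega)]
      have hcval := orderEmbOfFin_compl_of_lt_min M hne hMc
        ⟨((p + 1 : Fin (n + 1)) : ℕ) - (k + 1), by have := p.isLt; omega⟩
        (by simp only [Fin.val_mk]; omega)
      ext
      simp only [Fin.val_mk]
      rw [hcval]
      simp only [Fin.val_mk]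
      omega
  · rw [hp, Fin.cycleRange_self]
    rw [shufflePerm_apply_ge _ hM' hM'c K (by simp only [hKdef, Fin.val_mk]; omega),
      shufflePerm_apply_lt _ hM hMc 0 (by simp)]
    rw [← hG]
    rw [hGeq ⟨(K : ℕ) - k, by have := K.isLt; omega⟩
      (by simp only [Fin.val_mk, hKdef]; omega)]
    simp only [Fin.val_zero]
    rw [Finset.orderEmbOfFin_zero hM (by omega)]
  · rw [Fin.cycleRange_of_gt hp]
    have hpgt : k + (m₀ : ℕ) < (p : ℕ) := by rw [Fin.lt_def] at hp; exact hp
    rw [shufflePerm_apply_ge _ hM' hM'c p (by omega),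
      shufflePerm_apply_ge _ hM hMc p (by omega)]
    rw [← hG]
    rw [hGgt ⟨(p : ℕ) - k, by have := p.isLt; omega⟩ (by simp only [Fin.val_mk]; omega)]
    refine congrArg _ (Fin.ext ?_)
    simp only [Fin.val_mk]
    omega


lemma sign_shufflePerm (q : ℕ) (M : Finset (Fin n)) (hM : M.card = q) (hMc : Mᶜ.card = n - q) :
    Equiv.Perm.sign (shufflePerm M hM hMc) =
      (-1) ^ (∑ a ∈ M, (a : ℕ) + ∑ i ∈ Finset.range q, i) := by
  induction q generalizing M with
  | zero =>
    have hM0 : M = ∅ := Finset.card_eq_zero.mp hM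
    subst hM0
    have h1 : shufflePerm (∅ : Finset (Fin n)) hM hMc = Equiv.refl (Fin n) := by
      apply Equiv.ext
      intro p
      rw [shufflePerm_apply_ge _ hM hMc p (Nat.zero_le _)]
      have hu : (fun j : Fin (n - 0) => (⟨(j : ℕ), by have := j.isLt; omega⟩ : Fin n))
          = ⇑((∅ᶜ : Finset (Fin n)).orderEmbOfFin hMc) :=
        Finset.orderEmbOfFin_unique hMc (fun x => by simp)
          (fun a b hab => by simpa [Fin.mk_lt_mk] using hab)
      rw [← hu]
      ext
      simp
    rw [h1]
    simp
  | succ k IH =>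
    have hne : M.Nonempty := Finset.card_pos.mp (by omega)
    obtain ⟨n', rfl⟩ : ∃ n', n = n' + 1 := ⟨n - 1, by have := card_le_n M hM; omega⟩
    set m₀ := M.min' hne with hm₀def
    have hm₀M : m₀ ∈ M := M.min'_mem hne
    have hM' : (M.erase m₀).card = k := by rw [Finset.card_erase_of_mem hm₀M, hM]; omega
    have hM'c : (M.erase m₀)ᶜ.card = (n' + 1) - k := by
      rw [Finset.card_compl, hM', Fintype.card_fin]
    have hK : k + (m₀ : ℕ) < n' + 1 := by
      have h1 := min_add_le_orderEmbOfFin M hne hM ⟨k, by omega⟩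
      have h2 := (M.orderEmbOfFin hM ⟨k, by omega⟩).isLt
      simp only [Fin.val_mk] at h1
      omega
    have hrel := shufflePerm_erase M hne hM hMc hM' hM'c hK
    have hsig := congrArg Equiv.Perm.sign hrel
    rw [Equiv.Perm.sign_mul, Fin.sign_cycleRange, IH (M.erase m₀) hM' hM'c] at hsig
    simp only [Fin.val_mk] at hsig
    have hsq : ((-1 : ℤˣ) ^ (k + (m₀ : ℕ))) * ((-1 : ℤˣ) ^ (k + (m₀ : ℕ))) = 1 :=
      Int.units_mul_self _
    have : Equiv.Perm.sign (shufflePerm M hM hMc)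
        = (-1 : ℤˣ) ^ (∑ a ∈ M.erase m₀, (a : ℕ) + ∑ i ∈ Finset.range k, i)
          * (-1 : ℤˣ) ^ (k + (m₀ : ℕ)) := by
      calc Equiv.Perm.sign (shufflePerm M hM hMc)
          = Equiv.Perm.sign (shufflePerm M hM hMc)
            * (((-1 : ℤˣ) ^ (k + (m₀ : ℕ))) * ((-1 : ℤˣ) ^ (k + (m₀ : ℕ)))) := by
            rw [hsq, mul_one]
        _ = (Equiv.Perm.sign (shufflePerm M hM hMc) * (-1 : ℤˣ) ^ (k + (m₀ : ℕ)))
            * (-1 : ℤˣ) ^ (k + (m₀ : ℕ)) := by rw [mul_assoc]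
        _ = _ := by rw [← hsig]
    rw [this, ← pow_add]
    congr 1
    have hsum : (∑ a ∈ M.erase m₀, (a : ℕ)) + (m₀ : ℕ) = ∑ a ∈ M, (a : ℕ) :=
      Finset.sum_erase_add M _ hm₀M
    rw [Finset.sum_range_succ]
    omega

lemma det_toBlocks_inv {m p : Type} [Fintype m] [Fintype p] [DecidableEq m] [DecidableEq p]
    {K : Type} [Field K] (D : Matrix (m ⊕ p) (m ⊕ p) K) (hD : IsUnit D.det) :
    Matrix.det ((D⁻¹).toBlocks₁₁) * D.det = Matrix.det (D.toBlocks₂₂) := by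
  have h1 : D * D⁻¹ = 1 := Matrix.mul_nonsing_inv D hD
  set E := D⁻¹ with hE
  have hD2 : D = Matrix.fromBlocks D.toBlocks₁₁ D.toBlocks₁₂ D.toBlocks₂₁ D.toBlocks₂₂ :=
    (Matrix.fromBlocks_toBlocks D).symm
  have h1' : Matrix.fromBlocks D.toBlocks₁₁ D.toBlocks₁₂ D.toBlocks₂₁ D.toBlocks₂₂
      * Matrix.fromBlocks E.toBlocks₁₁ E.toBlocks₁₂ E.toBlocks₂₁ E.toBlocks₂₂
      = 1 := by rw [Matrix.fromBlocks_toBlocks, Matrix.fromBlocks_toBlocks]; exact h1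
  rw [Matrix.fromBlocks_multiply, ← Matrix.fromBlocks_one] at h1'
  have h11 := congrArg Matrix.toBlocks₁₁ h1'
  have h21 := congrArg Matrix.toBlocks₂₁ h1'
  simp only [Matrix.toBlocks_fromBlocks₁₁, Matrix.toBlocks_fromBlocks₂₁] at h11 h21
  have key : D * Matrix.fromBlocks (E.toBlocks₁₁) 0 (E.toBlocks₂₁) 1
      = Matrix.fromBlocks 1 D.toBlocks₁₂ 0 D.toBlocks₂₂ := by
    conv_lhs => rw [hD2]
    rw [Matrix.fromBlocks_multiply, Matrix.mul_zero, Matrix.mul_zero, Matrix.mul_one,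
      Matrix.mul_one, zero_add, zero_add, h11, h21]
  have hdet := congrArg Matrix.det key
  rw [Matrix.det_mul, Matrix.det_fromBlocks_zero₁₂, Matrix.det_fromBlocks_zero₂₁] at hdet
  simp only [Matrix.det_one, one_mul, mul_one] at hdet
  rw [mul_comm]
  exact hdet

lemma neg_one_pow_congr {K : Type} [Monoid K] [HasDistribNeg K] {a b : ℕ} (h : a % 2 = b % 2) :
    ((-1 : K) ^ a = (-1) ^ b) := by
  conv_lhs => rw [← Nat.div_add_mod a 2]
  conv_rhs => rw [← Nat.div_add_mod b 2]
  rw [pow_add, pow_add, pow_mul, pow_mul, neg_one_sq, one_pow, one_pow, h]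

end JacobiAux

open JacobiAux in
/-- Jacobi's identity on complementary minors: if `U` is an invertible `n × n` matrix over a
field with inverse `V = U⁻¹`, and `M, N ⊆ {1,…,n}` with `|M| = |N| = q`, then
`det (V_{r,s})_{r∈M, s∈N} = sgn_{M,N} / det U * det (U_{r,s})_{r∈[n]∖N, s∈[n]∖M}`,
where `sgn_{M,N} = (-1)^{∑_{r∈[n]∖N} r + ∑_{s∈[n]∖M} s}` (1-based indices). -/
theorem jacobi_complementary_minors {K : Type} [Field K] (n q : ℕ)
    (U : Matrix (Fin n) (Fin n) K) (hU : IsUnit U.det)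
    (M N : Finset (Fin n)) (hM : M.card = q) (hN : N.card = q)
    (hMc : Mᶜ.card = n - q) (hNc : Nᶜ.card = n - q) :
    Matrix.det ((U⁻¹).submatrix
        (fun i : Fin q => (M.orderIsoOfFin hM i : Fin n))
        (fun j : Fin q => (N.orderIsoOfFin hN j : Fin n)))
      = (-1 : K) ^ ((∑ r ∈ Nᶜ, ((r : ℕ) + 1)) + ∑ s ∈ Mᶜ, ((s : ℕ) + 1)) / U.det
        * Matrix.det (U.submatrix
            (fun i : Fin (n - q) => (Nᶜ.orderIsoOfFin hNc i : Fin n))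
            (fun j : Fin (n - q) => (Mᶜ.orderIsoOfFin hMc j : Fin n))) := by
  have hq : q ≤ n := card_le_n M hM
  set εM := shuffleEquiv M hM hMc with hεM
  set εN := shuffleEquiv N hN hNc with hεN
  set D := U.submatrix εN εM with hDdef
  have hDC : D * ((U⁻¹).submatrix εM εN) = 1 := by
    rw [hDdef, Matrix.submatrix_mul_equiv, Matrix.mul_nonsing_inv _ hU,
      Matrix.submatrix_one_equiv]
  have hDunit : IsUnit D.det := Matrix.isUnit_det_of_right_inverse hDC
  have hBD : (U⁻¹).submatrix ⇑εM ⇑εN = D⁻¹ := (Matrix.inv_eq_right_inv hDC).symm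
  set eqv : Fin n ≃ (Fin q ⊕ Fin (n - q)) :=
    (finCongr (by omega)).trans finSumFinEquiv.symm with heqv
  set σM := shufflePerm M hM hMc with hσM
  set σN := shufflePerm N hN hNc with hσN
  set eM := (∑ a ∈ M, (a : ℕ)) + ∑ i ∈ Finset.range q, i with heM
  set eN := (∑ a ∈ N, (a : ℕ)) + ∑ i ∈ Finset.range q, i with heN
  have hcomp : ⇑εN ∘ ⇑eqv = ⇑σN ∧ ⇑εM ∘ ⇑eqv = ⇑σM := ⟨rfl, rfl⟩
  have hDdet : D.det = (-1 : K) ^ (eN + eM) * U.det := by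
    have h1 : D.det = (D.submatrix ⇑eqv ⇑eqv).det := (Matrix.det_submatrix_equiv_self eqv D).symm
    have h2 : D.submatrix ⇑eqv ⇑eqv = (U.submatrix id ⇑σM).submatrix ⇑σN id := by
      rw [hDdef, Matrix.submatrix_submatrix, Matrix.submatrix_submatrix]
      rw [hcomp.1, hcomp.2]
      simp
    rw [h1, h2, Matrix.det_permute, Matrix.det_permute', hσM, hσN,
      sign_shufflePerm q M hM hMc, sign_shufflePerm q N hN hNc, ← heM, ← heN]
    simp only [Units.val_pow_eq_pow_val, Units.val_neg, Units.val_one, Int.cast_pow,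
      Int.cast_neg, Int.cast_one, pow_add]
    ring
  have hLHS : (U⁻¹).submatrix
      (fun i : Fin q => (M.orderIsoOfFin hM i : Fin n))
      (fun j : Fin q => (N.orderIsoOfFin hN j : Fin n)) = (D⁻¹).toBlocks₁₁ := by
    rw [← hBD]
    ext i j
    simp [hεM, hεN, Matrix.toBlocks₁₁, Finset.coe_orderIsoOfFin_apply]
  have hRHS : U.submatrix
      (fun i : Fin (n - q) => (Nᶜ.orderIsoOfFin hNc i : Fin n))
      (fun j : Fin (n - q) => (Mᶜ.orderIsoOfFin hMc j : Fin n)) = D.toBlocks₂₂ := by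
    rw [hDdef]
    ext i j
    simp [hεM, hεN, Matrix.toBlocks₂₂, Finset.coe_orderIsoOfFin_apply]
  have hblock := det_toBlocks_inv D hDunit
  rw [hLHS, hRHS]
  have hU0 : U.det ≠ 0 := hU.ne_zero
  rw [div_mul_eq_mul_div, eq_div_iff hU0]
  have hpar : ((∑ r ∈ Nᶜ, ((r : ℕ) + 1)) + ∑ s ∈ Mᶜ, ((s : ℕ) + 1)) % 2 = (eN + eM) % 2 := by
    have h1 : (∑ s ∈ Mᶜ, ((s : ℕ) + 1)) + ∑ s ∈ M, ((s : ℕ) + 1) = ∑ s : Fin n, ((s : ℕ) + 1) :=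
      Finset.sum_compl_add_sum M _
    have h2 : (∑ s ∈ Nᶜ, ((s : ℕ) + 1)) + ∑ s ∈ N, ((s : ℕ) + 1) = ∑ s : Fin n, ((s : ℕ) + 1) :=
      Finset.sum_compl_add_sum N _
    have h3 : ∑ s ∈ M, ((s : ℕ) + 1) = (∑ s ∈ M, (s : ℕ)) + q := by
      rw [Finset.sum_add_distrib, Finset.sum_const, hM, smul_eq_mul, mul_one]
    have h4 : ∑ s ∈ N, ((s : ℕ) + 1) = (∑ s ∈ N, (s : ℕ)) + q := by
      rw [Finset.sum_add_distrib, Finset.sum_const, hN, smul_eq_mul, mul_one]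
    omega
  have hself : (-1 : K) ^ (eN + eM) * (-1 : K) ^ (eN + eM) = 1 := by
    rw [← pow_add]
    exact Even.neg_one_pow ⟨eN + eM, by ring⟩
  have h3 : (-1 : K) ^ (eN + eM) * (Matrix.det ((D⁻¹).toBlocks₁₁) * U.det)
      = Matrix.det (D.toBlocks₂₂) := by
    calc (-1 : K) ^ (eN + eM) * (Matrix.det ((D⁻¹).toBlocks₁₁) * U.det)
        = Matrix.det ((D⁻¹).toBlocks₁₁) * ((-1 : K) ^ (eN + eM) * U.det) := by ring
      _ = Matrix.det ((D⁻¹).toBlocks₁₁) * D.det := by rw [← hDdet]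
      _ = Matrix.det (D.toBlocks₂₂) := hblock
  calc Matrix.det ((D⁻¹).toBlocks₁₁) * U.det
      = ((-1 : K) ^ (eN + eM) * (-1 : K) ^ (eN + eM))
        * (Matrix.det ((D⁻¹).toBlocks₁₁) * U.det) := by rw [hself, one_mul]
    _ = (-1 : K) ^ (eN + eM)
        * ((-1 : K) ^ (eN + eM) * (Matrix.det ((D⁻¹).toBlocks₁₁) * U.det)) := by ring
    _ = (-1 : K) ^ (eN + eM) * Matrix.det (D.toBlocks₂₂) := by rw [h3]
    _ = (-1 : K) ^ ((∑ r ∈ Nᶜ, ((r : ℕ) + 1)) + ∑ s ∈ Mᶜ, ((s : ℕ) + 1))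
        * Matrix.det (D.toBlocks₂₂) := by rw [neg_one_pow_congr hpar]
end

section
/- Let S be a simplicial poset of dimension n-1, I ∈ S a nonempty element, and W a k-module. Define the sheaf Υ_I^W on S by Υ_I^W(J) = W if J ≥ I and 0 otherwise, with restriction maps the identity on W when defined. Then the sheaf cohomology H^*(S; Υ_I^W) is isomorphic to H^{*-|I|}(lk_S I; W), the shifted cohomology of the link of I with constant coefficients W. -/
open Finset DirectSum

noncomputable section

variable {R : Type} [CommRing R] {α : Type} [Fintype α] [PartialOrder α] [DecidableEq α]
  [DecidableRel ((· ≤ ·) : α → α → Prop)]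

/-- The cochain group `⊕_{rank J = i} A(J)` of a cellular sheaf `A` (graded by rank). -/
def sheafCochain (rank : α → ℕ) (A : α → Type) [∀ I, AddCommGroup (A I)]
    [∀ I, Module R (A I)] (i : ℕ) : Type :=
  ⨁ I : {I : α // rank I = i}, A I.1

instance (rank : α → ℕ) (A : α → Type) [∀ I, AddCommGroup (A I)] [∀ I, Module R (A I)]
    (i : ℕ) : AddCommGroup (sheafCochain (R := R) rank A i) := by
  unfold sheafCochain; infer_instance

instance (rank : α → ℕ) (A : α → Type) [∀ I, AddCommGroup (A I)] [∀ I, Module R (A I)]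
    (i : ℕ) : Module R (sheafCochain (R := R) rank A i) := by
  unfold sheafCochain; infer_instance

/-- The differential of the cochain complex of a cellular sheaf `A`,
`d = ⊕ [I':I] A(I ≤ I')`. -/
def sheafDifferential (rank : α → ℕ) (A : α → Type) [∀ I, AddCommGroup (A I)]
    [∀ I, Module R (A I)] (res : ∀ I J : α, I ≤ J → A I →ₗ[R] A J)
    (inc : α → α → R) (i : ℕ) :
    sheafCochain (R := R) rank A i →ₗ[R] sheafCochain (R := R) rank A (i + 1) :=
  DirectSum.toModule R _ _ (fun I : {I : α // rank I = i} =>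
    ∑ J ∈ (Finset.univ.filter
        (fun J : {J : α // rank J = i + 1} => I.1 ≤ J.1)).attach,
      inc J.1.1 I.1 •
        ((DirectSum.lof R {J : α // rank J = i + 1} (fun J => A J.1) J.1).comp
          (res I.1 J.1.1 (Finset.mem_filter.mp J.2).2)))

/-- The cochain group of the constant sheaf `W` on the link `lk_S I₀` (graded by link rank;
degree `0` is the minimal element `I₀` of the link itself). -/
def linkCochain (rank : α → ℕ) (I₀ : α) (s' : ℕ) (W : Type) [AddCommGroup W] [Module R W]
    (ρ : ℕ) : Type :=
  ⨁ _J : {J : α // I₀ ≤ J ∧ rank J = s' + 1 + ρ}, W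

instance (rank : α → ℕ) (I₀ : α) (s' : ℕ) (W : Type) [AddCommGroup W] [Module R W] (ρ : ℕ) :
    AddCommGroup (linkCochain (R := R) rank I₀ s' W ρ) := by
  unfold linkCochain; infer_instance

instance (rank : α → ℕ) (I₀ : α) (s' : ℕ) (W : Type) [AddCommGroup W] [Module R W] (ρ : ℕ) :
    Module R (linkCochain (R := R) rank I₀ s' W ρ) := by
  unfold linkCochain; infer_instance

/-- The differential of the cochain complex of the constant sheaf `W` on the link `lk_S I₀`:
all restriction maps are identities, weighted by the incidence numbers. -/
def linkDifferential (rank : α → ℕ) (I₀ : α) (s' : ℕ) (W : Type) [AddCommGroup W]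
    [Module R W] (inc : α → α → R) (ρ : ℕ) :
    linkCochain (R := R) rank I₀ s' W ρ →ₗ[R] linkCochain (R := R) rank I₀ s' W (ρ + 1) :=
  DirectSum.toModule R _ _ (fun J : {J : α // I₀ ≤ J ∧ rank J = s' + 1 + ρ} =>
    ∑ J' ∈ (Finset.univ.filter
        (fun J' : {J' : α // I₀ ≤ J' ∧ rank J' = s' + 1 + (ρ + 1)} => J.1 ≤ J'.1)).attach,
      inc J'.1.1 J.1 •
        (DirectSum.lof R {J' : α // I₀ ≤ J' ∧ rank J' = s' + 1 + (ρ + 1)} (fun _ => W) J'.1))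

section AuxLemmas

variable {R : Type} [CommRing R] {α : Type} [Fintype α] [PartialOrder α] [DecidableEq α]
  [DecidableRel ((· ≤ ·) : α → α → Prop)]

/-- Kernels correspond under a commuting square of equivalences. -/
lemma aux_ker_map_eq {M N M' N' : Type} [AddCommGroup M] [Module R M] [AddCommGroup N]
    [Module R N] [AddCommGroup M'] [Module R M'] [AddCommGroup N'] [Module R N']
    (g : M →ₗ[R] N) (g' : M' →ₗ[R] N') (eM : M ≃ₗ[R] M') (eN : N ≃ₗ[R] N')
    (hg : ∀ x, eN (g x) = g' (eM x)) :
    (LinearMap.ker g).map (eM : M →ₗ[R] M') = LinearMap.ker g' := by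
  ext x
  simp only [Submodule.mem_map, LinearMap.mem_ker]
  constructor
  · rintro ⟨y, hy, rfl⟩
    rw [LinearEquiv.coe_coe, ← hg, hy, map_zero]
  · intro hx
    refine ⟨eM.symm x, ?_, by simp⟩
    have := hg (eM.symm x)
    rw [eM.apply_symm_apply, hx] at this
    exact eN.injective (by simpa using this)

/-- Cohomology groups correspond under a chain isomorphism. -/
lemma aux_cohom_equiv {L M N L' M' N' : Type} [AddCommGroup L] [Module R L]
    [AddCommGroup M] [Module R M] [AddCommGroup N] [Module R N]
    [AddCommGroup L'] [Module R L'] [AddCommGroup M'] [Module R M']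
    [AddCommGroup N'] [Module R N']
    (f : L →ₗ[R] M) (g : M →ₗ[R] N) (f' : L' →ₗ[R] M') (g' : M' →ₗ[R] N')
    (eL : L ≃ₗ[R] L') (eM : M ≃ₗ[R] M') (eN : N ≃ₗ[R] N')
    (hf : ∀ x, eM (f x) = f' (eL x)) (hg : ∀ x, eN (g x) = g' (eM x)) :
    Nonempty ((LinearMap.ker g ⧸
        Submodule.comap (LinearMap.ker g).subtype (LinearMap.range f))
      ≃ₗ[R] (LinearMap.ker g' ⧸
        Submodule.comap (LinearMap.ker g').subtype (LinearMap.range f'))) := by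
  have hker : (LinearMap.ker g).map (eM : M →ₗ[R] M') = LinearMap.ker g' :=
    aux_ker_map_eq g g' eM eN hg
  let ek : LinearMap.ker g ≃ₗ[R] LinearMap.ker g' :=
    (eM.submoduleMap (LinearMap.ker g)).trans (LinearEquiv.ofEq _ _ hker)
  have hmap : (Submodule.comap (LinearMap.ker g).subtype (LinearMap.range f)).map
      (ek : LinearMap.ker g →ₗ[R] LinearMap.ker g')
      = Submodule.comap (LinearMap.ker g').subtype (LinearMap.range f') := by
    ext x
    simp only [Submodule.mem_map, Submodule.mem_comap, Submodule.subtype_apply,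
      LinearMap.mem_range]
    constructor
    · rintro ⟨y, ⟨l, hl⟩, rfl⟩
      refine ⟨eL l, ?_⟩
      have : (((ek : LinearMap.ker g →ₗ[R] LinearMap.ker g') y : M')) = eM (y : M) := rfl
      rw [this, ← hl, hf]
    · rintro ⟨l, hl⟩
      have hy : g (f (eL.symm l)) = 0 := by
        have h1 := hg (f (eL.symm l))
        have h2 := hf (eL.symm l)
        rw [eL.apply_symm_apply] at h2
        rw [h2, hl] at h1
        have : g' (x : M') = 0 := x.2
        rw [this] at h1
        exact eN.injective (by simpa using h1)
      refine ⟨⟨f (eL.symm l), hy⟩, ⟨eL.symm l, rfl⟩, ?_⟩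
      apply Subtype.ext
      have : (((ek : LinearMap.ker g →ₗ[R] LinearMap.ker g') ⟨f (eL.symm l), hy⟩ : M')) = eM (f (eL.symm l)) := rfl
      rw [this]
      have h2 := hf (eL.symm l)
      rw [eL.apply_symm_apply] at h2
      rw [h2, hl]
  exact ⟨Submodule.Quotient.equiv _ _ ek hmap⟩

end AuxLemmas

set_option linter.unusedSectionVars false

section UpsEquiv

variable {R : Type} [CommRing R] {α : Type} [Fintype α] [PartialOrder α] [DecidableEq α]
  [DecidableRel ((· ≤ ·) : α → α → Prop)]
  (rank : α → ℕ) (A : α → Type) [∀ I, AddCommGroup (A I)] [∀ I, Module R (A I)]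
  (I₀ : α) (s' : ℕ) (W : Type) [AddCommGroup W] [Module R W]

/-- Componentwise comparison map from the sheaf cochain complex to the link cochain complex. -/
def toLink (e : ∀ J : α, I₀ ≤ J → (A J ≃ₗ[R] W)) (ρ : ℕ) :
    sheafCochain (R := R) rank A (s' + 1 + ρ) →ₗ[R] linkCochain (R := R) rank I₀ s' W ρ :=
  DirectSum.toModule R _ _ (fun I : {I : α // rank I = s' + 1 + ρ} =>
    if h : I₀ ≤ I.1 then
      (DirectSum.lof R {J : α // I₀ ≤ J ∧ rank J = s' + 1 + ρ} (fun _ => W)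
        ⟨I.1, h, I.2⟩).comp (e I.1 h).toLinearMap
    else 0)

/-- Componentwise comparison map from the link cochain complex to the sheaf cochain complex. -/
def fromLink (e : ∀ J : α, I₀ ≤ J → (A J ≃ₗ[R] W)) (ρ : ℕ) :
    linkCochain (R := R) rank I₀ s' W ρ →ₗ[R] sheafCochain (R := R) rank A (s' + 1 + ρ) :=
  DirectSum.toModule R _ _ (fun J : {J : α // I₀ ≤ J ∧ rank J = s' + 1 + ρ} =>
    (DirectSum.lof R {I : α // rank I = s' + 1 + ρ} (fun I => A I.1)
      ⟨J.1, J.2.2⟩).comp (e J.1 J.2.1).symm.toLinearMap)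

lemma toLink_lof_pos (e : ∀ J : α, I₀ ≤ J → (A J ≃ₗ[R] W)) (ρ : ℕ)
    (I : {I : α // rank I = s' + 1 + ρ}) (h : I₀ ≤ I.1) (x : A I.1) :
    toLink rank A I₀ s' W e ρ
        (DirectSum.lof R {I : α // rank I = s' + 1 + ρ} (fun I => A I.1) I x)
      = DirectSum.lof R {J : α // I₀ ≤ J ∧ rank J = s' + 1 + ρ} (fun _ => W)
          ⟨I.1, h, I.2⟩ (e I.1 h x) := by
  unfold toLink
  erw [DirectSum.toModule_lof]
  exact congrArg (fun f : A I.1 →ₗ[R] linkCochain (R := R) rank I₀ s' W ρ => f x) (dif_pos h)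

lemma fromLink_lof (e : ∀ J : α, I₀ ≤ J → (A J ≃ₗ[R] W)) (ρ : ℕ)
    (J : {J : α // I₀ ≤ J ∧ rank J = s' + 1 + ρ}) (x : W) :
    fromLink rank A I₀ s' W e ρ
        (DirectSum.lof R {J : α // I₀ ≤ J ∧ rank J = s' + 1 + ρ} (fun _ => W) J x)
      = DirectSum.lof R {I : α // rank I = s' + 1 + ρ} (fun I => A I.1)
          ⟨J.1, J.2.2⟩ ((e J.1 J.2.1).symm x) := by
  unfold fromLink
  erw [DirectSum.toModule_lof]
  rfl

/-- The comparison maps are mutually inverse. -/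
def upsEquiv (e : ∀ J : α, I₀ ≤ J → (A J ≃ₗ[R] W))
    (hzero : ∀ J : α, ¬ I₀ ≤ J → Subsingleton (A J)) (ρ : ℕ) :
    sheafCochain (R := R) rank A (s' + 1 + ρ) ≃ₗ[R] linkCochain (R := R) rank I₀ s' W ρ :=
  LinearEquiv.ofLinear (toLink rank A I₀ s' W e ρ) (fromLink rank A I₀ s' W e ρ)
    (by
      refine DirectSum.linearMap_ext R fun J => ?_
      ext x
      show toLink rank A I₀ s' W e ρ (fromLink rank A I₀ s' W e ρ (lof R _ (fun _ => W) J x)) = lof R _ (fun _ => W) J x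
      erw [fromLink_lof rank A I₀ s' W e ρ J]
      erw [toLink_lof_pos rank A I₀ s' W e ρ ⟨J.1, J.2.2⟩ J.2.1]
      simp only [LinearEquiv.apply_symm_apply]
      rfl)
    (by
      refine DirectSum.linearMap_ext R fun I => ?_
      by_cases h : I₀ ≤ I.1
      · ext x
        show fromLink rank A I₀ s' W e ρ (toLink rank A I₀ s' W e ρ (lof R {I : α // rank I = s' + 1 + ρ} (fun I => A I.1) I x)) = lof R {I : α // rank I = s' + 1 + ρ} (fun I => A I.1) I x
        erw [toLink_lof_pos rank A I₀ s' W e ρ I h]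
        erw [fromLink_lof rank A I₀ s' W e ρ ⟨I.1, h, I.2⟩]
        simp only [LinearEquiv.symm_apply_apply]
        rfl
      · haveI := hzero I.1 h
        ext x
        rw [Subsingleton.elim x 0]
        simp)

/-- The comparison maps commute with the differentials. -/
lemma toLink_comm (res : ∀ I J : α, I ≤ J → A I →ₗ[R] A J) (inc : α → α → R)
    (e : ∀ J : α, I₀ ≤ J → (A J ≃ₗ[R] W))
    (hzero : ∀ J : α, ¬ I₀ ≤ J → Subsingleton (A J))
    (hcompat : ∀ (J J' : α) (h : I₀ ≤ J) (h' : J ≤ J') (x : A J),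
      e J' (h.trans h') (res J J' h' x) = e J h x) (ρ : ℕ) :
    (toLink rank A I₀ s' W e (ρ + 1)).comp
        (sheafDifferential (R := R) rank A res inc (s' + 1 + ρ))
      = (linkDifferential (R := R) rank I₀ s' W inc ρ).comp
        (toLink rank A I₀ s' W e ρ) := by
  refine DirectSum.linearMap_ext R fun I => ?_
  by_cases h : I₀ ≤ I.1
  · ext x
    show toLink rank A I₀ s' W e (ρ + 1) (sheafDifferential (R := R) rank A res inc (s' + 1 + ρ) (lof R {I : α // rank I = s' + 1 + ρ} (fun I => A I.1) I x)) = linkDifferential (R := R) rank I₀ s' W inc ρ (toLink rank A I₀ s' W e ρ (lof R {I : α // rank I = s' + 1 + ρ} (fun I => A I.1) I x))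
    have hL : (toLink rank A I₀ s' W e (ρ + 1))
        ((sheafDifferential (R := R) rank A res inc (s' + 1 + ρ))
          (DirectSum.lof R {I : α // rank I = s' + 1 + ρ} (fun I => A I.1) I x))
        = ∑ J ∈ (Finset.univ.filter
            (fun J : {J : α // rank J = s' + 1 + ρ + 1} => I.1 ≤ J.1)).attach,
          inc J.1.1 I.1 •
            DirectSum.lof R {J : α // I₀ ≤ J ∧ rank J = s' + 1 + (ρ + 1)} (fun _ => W)
              ⟨J.1.1, h.trans (Finset.mem_filter.mp J.2).2, J.1.2⟩ (e I.1 h x) := by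
      unfold sheafDifferential
      erw [DirectSum.toModule_lof]
      erw [LinearMap.sum_apply, map_sum]
      refine Finset.sum_congr rfl fun J _ => ?_
      erw [LinearMap.smul_apply, map_smul, LinearMap.comp_apply]
      erw [toLink_lof_pos rank A I₀ s' W e (ρ + 1) J.1
        (h.trans (Finset.mem_filter.mp J.2).2)]
      erw [hcompat I.1 J.1.1 h (Finset.mem_filter.mp J.2).2 x]
      rfl
    have hR : (linkDifferential (R := R) rank I₀ s' W inc ρ)
        ((toLink rank A I₀ s' W e ρ)
          (DirectSum.lof R {I : α // rank I = s' + 1 + ρ} (fun I => A I.1) I x))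
        = ∑ J' ∈ (Finset.univ.filter
            (fun J' : {J' : α // I₀ ≤ J' ∧ rank J' = s' + 1 + (ρ + 1)} => I.1 ≤ J'.1)).attach,
          inc J'.1.1 I.1 •
            DirectSum.lof R {J : α // I₀ ≤ J ∧ rank J = s' + 1 + (ρ + 1)} (fun _ => W)
              J'.1 (e I.1 h x) := by
      erw [toLink_lof_pos rank A I₀ s' W e ρ I h]
      unfold linkDifferential
      erw [DirectSum.toModule_lof]
      erw [LinearMap.sum_apply]
      refine Finset.sum_congr rfl fun J _ => ?_
      erw [LinearMap.smul_apply]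
    erw [hL, hR]
    exact Finset.sum_bij'
      (fun a _ => ⟨⟨a.1.1, h.trans (Finset.mem_filter.mp a.2).2, a.1.2⟩,
        Finset.mem_filter.mpr ⟨Finset.mem_univ _, (Finset.mem_filter.mp a.2).2⟩⟩)
      (fun b _ => ⟨⟨b.1.1, b.1.2.2⟩,
        Finset.mem_filter.mpr ⟨Finset.mem_univ _, (Finset.mem_filter.mp b.2).2⟩⟩)
      (fun a _ => Finset.mem_attach _ _)
      (fun b _ => Finset.mem_attach _ _)
      (fun a _ => Subtype.ext (Subtype.ext rfl))
      (fun b _ => Subtype.ext (Subtype.ext rfl))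
      (fun a _ => rfl)
  · haveI := hzero I.1 h
    ext x
    rw [Subsingleton.elim x 0]
    simp

/-- `upsEquiv` with a flexible degree index. -/
def upsEquivD (e : ∀ J : α, I₀ ≤ J → (A J ≃ₗ[R] W))
    (hzero : ∀ J : α, ¬ I₀ ≤ J → Subsingleton (A J)) (i ρ : ℕ) (h : i = s' + 1 + ρ) :
    sheafCochain (R := R) rank A i ≃ₗ[R] linkCochain (R := R) rank I₀ s' W ρ := by
  subst h
  exact upsEquiv rank A I₀ s' W e hzero ρ

end UpsEquiv

/-- Let `S` be a simplicial poset of dimension `n-1` with a sign convention, `I₀ ∈ S` a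
nonempty element of rank `|I₀| = s' + 1`, and `W` an `R`-module.  Let `A` be the sheaf
`Υ_{I₀}^W` on `S`: `A(J) ≅ W` for `J ≥ I₀` (with identity restriction maps) and `A(J) = 0`
otherwise.  Then the sheaf cohomology `H^*(S; Υ_{I₀}^W)` is isomorphic to the cohomology
`H^{* - |I₀|}(lk_S I₀; W)` of the link of `I₀` with constant coefficients `W`
(degrees matched under the shift by `|I₀|`). -/
theorem cohomology_of_ups_sheaf_eq_link
    [DecidableRel ((· < ·) : α → α → Prop)]
    (rank : α → ℕ) (bot : α) (hbot : ∀ I, bot ≤ I) (hrankbot : rank bot = 0)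
    (hbool : ∀ I : α, Nonempty ({J : α // J ≤ I} ≃o Finset (Fin (rank I))))
    (hmono : ∀ I J : α, I < J → rank I < rank J)
    (n : ℕ) (hdim : ∀ I, rank I ≤ n)
    (inc : α → α → R)
    (hpm : ∀ I J : α, I < J → rank J = rank I + 1 → inc J I = 1 ∨ inc J I = -1)
    (hsign : ∀ I J J' J'' : α, I < J → rank J = rank I + 2 →
      I < J' → J' < J → I < J'' → J'' < J → J' ≠ J'' →
      inc J J' * inc J' I + inc J J'' * inc J'' I = 0)
    (I₀ : α) (hI₀ : I₀ ≠ bot) (s' : ℕ) (hs : rank I₀ = s' + 1)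
    (W : Type) [AddCommGroup W] [Module R W]
    (A : α → Type) [∀ I, AddCommGroup (A I)] [∀ I, Module R (A I)]
    (res : ∀ I J : α, I ≤ J → A I →ₗ[R] A J)
    (hres : ∀ (I J L : α) (h1 : I ≤ J) (h2 : J ≤ L),
      (res J L h2).comp (res I J h1) = res I L (h1.trans h2))
    (e : ∀ J : α, I₀ ≤ J → (A J ≃ₗ[R] W))
    (hzero : ∀ J : α, ¬ I₀ ≤ J → Subsingleton (A J))
    (hcompat : ∀ (J J' : α) (h : I₀ ≤ J) (h' : J ≤ J') (x : A J),
      e J' (h.trans h') (res J J' h' x) = e J h x) :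
    Nonempty
        ((LinearMap.ker (sheafDifferential (R := R) rank A res inc (s' + 1)) ⧸
            Submodule.comap
              (LinearMap.ker (sheafDifferential (R := R) rank A res inc (s' + 1))).subtype
              (LinearMap.range (sheafDifferential (R := R) rank A res inc s')))
          ≃ₗ[R] LinearMap.ker (linkDifferential (R := R) rank I₀ s' W inc 0))
    ∧ ∀ r : ℕ,
        Nonempty
          ((LinearMap.ker (sheafDifferential (R := R) rank A res inc (s' + r + 2)) ⧸
              Submodule.comap
                (LinearMap.ker (sheafDifferential (R := R) rank A res inc (s' + r + 2))).subtype
                (LinearMap.range (sheafDifferential (R := R) rank A res inc (s' + r + 1))))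
            ≃ₗ[R]
            (LinearMap.ker (linkDifferential (R := R) rank I₀ s' W inc (r + 1)) ⧸
              Submodule.comap
                (LinearMap.ker (linkDifferential (R := R) rank I₀ s' W inc (r + 1))).subtype
                (LinearMap.range (linkDifferential (R := R) rank I₀ s' W inc r)))) := by
  have hcomm : ∀ ρ : ℕ, ∀ x, upsEquiv rank A I₀ s' W e hzero (ρ + 1)
      (sheafDifferential (R := R) rank A res inc (s' + 1 + ρ) x)
      = linkDifferential (R := R) rank I₀ s' W inc ρ
        (upsEquiv rank A I₀ s' W e hzero ρ x) := by
    intro ρ x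
    have h := LinearMap.congr_fun
      (toLink_comm rank A I₀ s' W res inc e hzero hcompat ρ) x
    exact h
  constructor
  · haveI hsub : ∀ I : {I : α // rank I = s'}, Subsingleton (A I.1) := by
      intro I
      refine hzero I.1 fun hle => ?_
      rcases lt_or_eq_of_le hle with hlt | heq
      · have h1 := hmono _ _ hlt
        rw [hs, I.2] at h1
        omega
      · have h2 : rank I₀ = s' := heq ▸ I.2
        rw [hs] at h2
        omega
    have hrange : LinearMap.range (sheafDifferential (R := R) rank A res inc s') = ⊥ := by
      rw [LinearMap.range_eq_bot]
      apply LinearMap.ext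
      intro x
      haveI : Subsingleton (sheafCochain (R := R) rank A s') := by
        unfold sheafCochain
        infer_instance
      rw [Subsingleton.elim x 0, map_zero]
      rfl
    have hp : Submodule.comap
        (LinearMap.ker (sheafDifferential (R := R) rank A res inc (s' + 1))).subtype
        (LinearMap.range (sheafDifferential (R := R) rank A res inc s')) = ⊥ := by
      rw [hrange, Submodule.comap_bot, Submodule.ker_subtype]
    have hker := aux_ker_map_eq (R := R)
      (sheafDifferential (R := R) rank A res inc (s' + 1))
      (linkDifferential (R := R) rank I₀ s' W inc 0)
      (upsEquiv rank A I₀ s' W e hzero 0)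
      (upsEquiv rank A I₀ s' W e hzero 1)
      (hcomm 0)
    exact ⟨(Submodule.quotEquivOfEqBot _ hp).trans
      (((upsEquiv rank A I₀ s' W e hzero 0).submoduleMap
        (LinearMap.ker (sheafDifferential (R := R) rank A res inc (s' + 1)))).trans
      (LinearEquiv.ofEq _ _ hker))⟩
  · have hcommD : ∀ (i ρ : ℕ) (h1 : i = s' + 1 + ρ) (h2 : i + 1 = s' + 1 + (ρ + 1))
        (x : sheafCochain (R := R) rank A i),
        upsEquivD rank A I₀ s' W e hzero (i + 1) (ρ + 1) h2
            (sheafDifferential (R := R) rank A res inc i x)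
          = linkDifferential (R := R) rank I₀ s' W inc ρ
            (upsEquivD rank A I₀ s' W e hzero i ρ h1 x) := by
      intro i ρ h1 h2 x
      subst h1
      exact hcomm ρ x
    intro r
    exact aux_cohom_equiv
      (sheafDifferential (R := R) rank A res inc (s' + r + 1))
      (sheafDifferential (R := R) rank A res inc (s' + r + 2))
      (linkDifferential (R := R) rank I₀ s' W inc r)
      (linkDifferential (R := R) rank I₀ s' W inc (r + 1))
      (upsEquivD rank A I₀ s' W e hzero (s' + r + 1) r (by omega))
      (upsEquivD rank A I₀ s' W e hzero (s' + r + 2) (r + 1) (by omega))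
      (upsEquivD rank A I₀ s' W e hzero (s' + r + 3) (r + 2) (by omega))
      (hcommD (s' + r + 1) r (by omega) (by omega))
      (hcommD (s' + r + 2) (r + 1) (by omega) (by omega))
end
end

section
/- Let S be a Buchsbaum simplicial poset of dimension n-1 and define f~_k(S) = Σ_{I∈S, dim I = k} dim H~_{n-1-|I|}(lk_S I) for k ≥ 0. Then the f-polynomial satisfies f_S(t) = (1 - chi(S)) + (-1)^n Σ_{k≥0} f~_k(S) · (-t-1)^{k+1}. -/
open Polynomial Finset

section Aux

open scoped Classical

variable {α : Type} [Fintype α] [PartialOrder α] [DecidableEq α]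

lemma aux_card_le (r : ℕ) (t : Finset (Fin r)) :
    Fintype.card {s : Finset (Fin r) // s ≤ t} = 2 ^ t.card := by
  rw [Fintype.card_subtype]
  have h : (univ.filter (fun s : Finset (Fin r) => s ≤ t)) = t.powerset := by
    ext s; simp [Finset.mem_powerset]
  rw [h, Finset.card_powerset]

lemma rank_eq_card (rank : α → ℕ)
    (hbool : ∀ I : α, Nonempty ({J : α // J ≤ I} ≃o Finset (Fin (rank I))))
    {J : α} (e : {K : α // K ≤ J} ≃o Finset (Fin (rank J))) (K : α) (h : K ≤ J) :
    rank K = (e ⟨K, h⟩).card := by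
  obtain ⟨eK⟩ := hbool K
  have h1 : Fintype.card {K' : α // K' ≤ K} = 2 ^ rank K := by
    rw [Fintype.card_congr eK.toEquiv, Fintype.card_finset, Fintype.card_fin]
  have equiv2 : {K' : α // K' ≤ K} ≃ {s : Finset (Fin (rank J)) // s ≤ e ⟨K, h⟩} :=
    { toFun := fun K' => ⟨e ⟨K'.1, K'.2.trans h⟩, by
        rw [e.le_iff_le]; exact K'.2⟩
      invFun := fun s => ⟨(e.symm s.1).1, by
        have hs : e.symm s.1 ≤ e.symm (e ⟨K, h⟩) := e.symm.monotone s.2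
        exact (by simpa using hs : e.symm s.1 ≤ ⟨K, h⟩)⟩
      left_inv := fun K' => by simp
      right_inv := fun s => by simp }
  have h2 : Fintype.card {K' : α // K' ≤ K} = 2 ^ (e ⟨K, h⟩).card := by
    rw [Fintype.card_congr equiv2, aux_card_le]
  exact Nat.pow_right_injective (le_refl 2) (h1.symm.trans h2)

lemma link_sum (rank : α → ℕ)
    (hbool : ∀ I : α, Nonempty ({J : α // J ≤ I} ≃o Finset (Fin (rank I))))
    (J : α) :
    ∑ I ∈ univ.filter (fun I => I ≤ J),
        C ((-1 : ℚ) ^ (rank J - rank I)) * (X + 1) ^ (rank I) = X ^ rank J := by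
  obtain ⟨e⟩ := hbool J
  have hsub : ∑ I ∈ univ.filter (fun I => I ≤ J),
      C ((-1 : ℚ) ^ (rank J - rank I)) * (X + 1) ^ (rank I)
      = ∑ I : {K : α // K ≤ J},
          C ((-1 : ℚ) ^ (rank J - rank I.1)) * (X + 1) ^ (rank I.1) :=
    Finset.sum_subtype (univ.filter (fun I => I ≤ J)) (by simp)
      (fun I => C ((-1 : ℚ) ^ (rank J - rank I)) * (X + 1) ^ (rank I))
  rw [hsub]
  have htrans : ∀ I : {K : α // K ≤ J}, rank I.1 = (e I).card := by
    intro I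
    have := rank_eq_card rank hbool e I.1 I.2
    simpa using this
  have hsum2 : ∑ I : {K : α // K ≤ J},
      C ((-1 : ℚ) ^ (rank J - rank I.1)) * (X + 1) ^ (rank I.1)
      = ∑ s : Finset (Fin (rank J)),
          C ((-1 : ℚ) ^ (rank J - s.card)) * (X + 1) ^ s.card := by
    apply Fintype.sum_equiv e.toEquiv
    intro I
    rw [htrans I]
    rfl
  rw [hsum2]
  have hpows : ∑ s : Finset (Fin (rank J)),
      C ((-1 : ℚ) ^ (rank J - s.card)) * (X + 1) ^ s.card
      = ∑ s ∈ (univ : Finset (Fin (rank J))).powerset,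
          C ((-1 : ℚ) ^ (rank J - s.card)) * (X + 1) ^ s.card := by
    rw [Finset.powerset_univ]
  rw [hpows, Finset.sum_powerset_apply_card
    (fun m => C ((-1 : ℚ) ^ (rank J - m)) * (X + 1) ^ m)]
  rw [Finset.card_univ, Fintype.card_fin]
  have hX : (X : ℚ[X]) ^ rank J = ((X + 1) + (-1)) ^ rank J := by ring_nf
  rw [hX, add_pow]
  apply Finset.sum_congr rfl
  intro m hm
  rw [nsmul_eq_mul]
  have hC : (C ((-1 : ℚ) ^ (rank J - m)) : ℚ[X]) = (-1 : ℚ[X]) ^ (rank J - m) := by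
    rw [map_pow, map_neg, map_one]
  rw [hC]
  ring

end Aux

/-- Let `S` be a Buchsbaum simplicial poset of dimension `n-1`: for every nonempty `I ∈ S`
the reduced Betti numbers `b I i = dim H~_i(lk_S I)` vanish for `i ≠ n - 1 - |I|`, and
they satisfy the Euler–Poincaré relation `χ(lk_S I) - 1 = -b I (-1) + ∑_{i ≥ 0} (-1)^i b I i`.
Put `f~_k(S) = ∑_{dim I = k} dim H~_{n-1-|I|}(lk_S I)`.  Then the `f`-polynomial satisfies
`f_S(t) = (1 - χ(S)) + (-1)^n ∑_{k ≥ 0} f~_k(S) (-t-1)^{k+1}`. -/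
theorem buchsbaum_fpoly_formula {α : Type} [Fintype α] [PartialOrder α] [DecidableEq α]
    [DecidableRel ((· < ·) : α → α → Prop)]
    (rank : α → ℕ) (bot : α) (hbot : ∀ I, bot ≤ I) (hrankbot : rank bot = 0)
    (hbool : ∀ I : α, Nonempty ({J : α // J ≤ I} ≃o Finset (Fin (rank I))))
    (hmono : ∀ I J : α, I < J → rank I < rank J)
    (n : ℕ)
    (hdim : ∀ I, rank I ≤ n)
    (hdimtop : ∃ I, rank I = n)
    (b : α → ℤ → ℕ)
    (hBuch : ∀ I, I ≠ bot → ∀ i : ℤ, i ≠ (n : ℤ) - (rank I : ℤ) - 1 → b I i = 0)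
    (hEuler : ∀ I, I ≠ bot →
      (∑ J ∈ Finset.univ.filter (fun J : α => I < J), (-1 : ℚ) ^ (rank J - rank I - 1)) - 1
        = -(b I (-1) : ℚ) + ∑ i ∈ range (n + 1), (-1 : ℚ) ^ i * (b I (i : ℤ) : ℚ)) :
    (∑ I : α, (X : Polynomial ℚ) ^ (rank I))
      = C (1 - ∑ i ∈ range n, (-1 : ℚ) ^ i *
            ((Finset.univ.filter (fun I : α => rank I = i + 1)).card : ℚ))
        + C ((-1 : ℚ) ^ n) *
            ∑ k ∈ range n,
              C ((∑ I ∈ Finset.univ.filter (fun I : α => rank I = k + 1),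
                    (b I ((n : ℤ) - (rank I : ℤ) - 1) : ℚ)))
                * (-X - 1) ^ (k + 1) := by
  classical
  set L : α → ℚ := fun I =>
    1 + ∑ J ∈ univ.filter (fun J => I < J), (-1 : ℚ) ^ (rank J - rank I) with hLdef
  have hrank0 : ∀ I : α, rank I = 0 ↔ I = bot := by
    intro I
    constructor
    · intro h
      by_contra hne
      have hlt : bot < I := lt_of_le_of_ne (hbot I) (Ne.symm hne)
      have := hmono bot I hlt
      omega
    · intro h; rw [h, hrankbot]
  -- Key Taylor expansion
  have key : (∑ I : α, (X : Polynomial ℚ) ^ (rank I))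
      = ∑ k ∈ range (n + 1),
          C (∑ I ∈ univ.filter (fun I => rank I = k), L I) * (X + 1) ^ k := by
    have step1 : ∑ k ∈ range (n + 1),
        C (∑ I ∈ univ.filter (fun I => rank I = k), L I) * (X + 1) ^ k
        = ∑ k ∈ range (n + 1), ∑ I ∈ univ.filter (fun I => rank I = k),
            C (L I) * (X + 1) ^ (rank I) := by
      apply Finset.sum_congr rfl
      intro k _
      rw [map_sum, Finset.sum_mul]
      apply Finset.sum_congr rfl
      intro I hI
      rw [(Finset.mem_filter.mp hI).2]
    have step2 : ∑ k ∈ range (n + 1), ∑ I ∈ univ.filter (fun I => rank I = k),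
        C (L I) * (X + 1) ^ (rank I)
        = ∑ I : α, C (L I) * (X + 1) ^ (rank I) := by
      apply Finset.sum_fiberwise_of_maps_to
      intro I _
      rw [Finset.mem_range]
      exact Nat.lt_succ_of_le (hdim I)
    rw [step1, step2]
    have step3 : ∑ I : α, C (L I) * (X + 1) ^ (rank I)
        = ∑ I : α, ((X + 1) ^ (rank I)
            + ∑ J ∈ univ.filter (fun J => I < J),
                C ((-1 : ℚ) ^ (rank J - rank I)) * (X + 1) ^ (rank I)) := by
      apply Finset.sum_congr rfl
      intro I _
      simp only [hLdef]
      rw [map_add, map_one, map_sum, add_mul, one_mul, Finset.sum_mul]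
    rw [step3, Finset.sum_add_distrib]
    have swap : ∑ I : α, ∑ J ∈ univ.filter (fun J => I < J),
        C ((-1 : ℚ) ^ (rank J - rank I)) * (X + 1) ^ (rank I)
        = ∑ J : α, ∑ I ∈ univ.filter (fun I => I < J),
            C ((-1 : ℚ) ^ (rank J - rank I)) * (X + 1) ^ (rank I) := by
      simp only [Finset.sum_filter]
      exact Finset.sum_comm
    rw [swap, ← Finset.sum_add_distrib]
    apply Finset.sum_congr rfl
    intro J _
    have hins : (univ.filter (fun I => I ≤ J) : Finset α)
        = insert J (univ.filter (fun I => I < J)) := by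
      ext I
      simp only [Finset.mem_filter, Finset.mem_univ, true_and, Finset.mem_insert]
      constructor
      · intro h
        rcases eq_or_lt_of_le h with h' | h'
        · left; exact h'
        · right; exact h'
      · rintro (h | h)
        · exact h.le
        · exact h.le
    have hls := link_sum rank hbool J
    rw [hins, Finset.sum_insert (by simp)] at hls
    simp only [Nat.sub_self, pow_zero, map_one, one_mul] at hls
    exact hls.symm
  rw [key, Finset.sum_range_succ']
  -- c_0 term
  have hfilter0 : (univ.filter (fun I : α => rank I = 0)) = {bot} := by
    ext I; simp [hrank0]
  have hc0 : ∑ I ∈ univ.filter (fun I : α => rank I = 0), L I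
      = 1 - ∑ i ∈ range n, (-1 : ℚ) ^ i *
          ((univ.filter (fun I : α => rank I = i + 1)).card : ℚ) := by
    rw [hfilter0, Finset.sum_singleton]
    simp only [hLdef]
    have hfbot : (univ.filter (fun J : α => bot < J))
        = (univ.filter (fun J : α => rank J ≠ 0)) := by
      ext J
      simp only [Finset.mem_filter, Finset.mem_univ, true_and]
      constructor
      · intro h
        rw [Ne, hrank0]
        exact fun hJ => absurd (hJ ▸ h) (lt_irrefl bot)
      · intro h
        exact lt_of_le_of_ne (hbot J) (fun hJ => h ((hrank0 J).mpr hJ.symm))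
    have hfibval := Finset.sum_fiberwise_of_maps_to
      (s := univ.filter (fun J : α => rank J ≠ 0)) (t := range n)
      (g := fun J : α => rank J - 1)
      (f := fun J : α => (-1 : ℚ) ^ (rank J))
      (by
        intro J hJ
        simp only [Finset.mem_filter, Finset.mem_univ, true_and] at hJ
        have := hdim J
        simp only [Finset.mem_range]
        show rank J - 1 < n
        omega)
    have hfib : ∑ J ∈ univ.filter (fun J : α => rank J ≠ 0), (-1 : ℚ) ^ (rank J)
        = ∑ i ∈ range n, ∑ J ∈ univ.filter (fun J : α => rank J = i + 1),
            (-1 : ℚ) ^ (rank J) := by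
      rw [← hfibval]
      apply Finset.sum_congr rfl
      intro i _
      apply Finset.sum_congr _ (fun _ _ => rfl)
      ext J
      simp only [Finset.mem_filter, Finset.mem_univ, true_and]
      omega
    have hinner : ∀ i ∈ range n,
        ∑ J ∈ univ.filter (fun J : α => rank J = i + 1), (-1 : ℚ) ^ (rank J)
        = -((-1 : ℚ) ^ i * ((univ.filter (fun I : α => rank I = i + 1)).card : ℚ)) := by
      intro i _
      rw [Finset.sum_congr rfl (fun J hJ => by rw [(Finset.mem_filter.mp hJ).2])]
      rw [Finset.sum_const, nsmul_eq_mul, pow_succ]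
      ring
    have hshift : ∑ J ∈ univ.filter (fun J : α => bot < J),
        (-1 : ℚ) ^ (rank J - rank bot)
        = ∑ J ∈ univ.filter (fun J : α => rank J ≠ 0), (-1 : ℚ) ^ (rank J) := by
      rw [hfbot]
      apply Finset.sum_congr rfl
      intro J _
      rw [hrankbot, Nat.sub_zero]
    rw [hshift, hfib, Finset.sum_congr rfl hinner, Finset.sum_neg_distrib]
    ring
  -- per-I value of L for I ≠ bot
  have hLval : ∀ I : α, I ≠ bot →
      L I = (-1 : ℚ) ^ (n + rank I) * (b I ((n : ℤ) - (rank I : ℤ) - 1) : ℚ) := by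
    intro I hI
    have hr1 : 1 ≤ rank I :=
      Nat.one_le_iff_ne_zero.mpr (fun h => hI ((hrank0 I).mp h))
    have hrn : rank I ≤ n := hdim I
    have hE := hEuler I hI
    have hneg : ∑ J ∈ univ.filter (fun J => I < J), (-1 : ℚ) ^ (rank J - rank I)
        = -∑ J ∈ univ.filter (fun J => I < J), (-1 : ℚ) ^ (rank J - rank I - 1) := by
      rw [← Finset.sum_neg_distrib]
      apply Finset.sum_congr rfl
      intro J hJ
      have hlt := hmono I J (Finset.mem_filter.mp hJ).2
      have hm : (-1 : ℚ) ^ (rank J - rank I) = (-1 : ℚ) ^ ((rank J - rank I - 1) + 1) := by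
        congr 1
        omega
      rw [hm, pow_succ]
      ring
    have hLI : L I = (b I (-1) : ℚ)
        - ∑ i ∈ range (n + 1), (-1 : ℚ) ^ i * (b I (i : ℤ) : ℚ) := by
      simp only [hLdef]
      rw [hneg]
      have hA : ∑ J ∈ univ.filter (fun J => I < J), (-1 : ℚ) ^ (rank J - rank I - 1)
          = 1 + (-(b I (-1) : ℚ) + ∑ i ∈ range (n + 1), (-1 : ℚ) ^ i * (b I (i : ℤ) : ℚ)) := by
        linarith [hE]
      rw [hA]
      ring
    rcases eq_or_lt_of_le hrn with heq | hlt
    · have hsum0 : ∑ i ∈ range (n + 1), (-1 : ℚ) ^ i * (b I (i : ℤ) : ℚ) = 0 := by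
        apply Finset.sum_eq_zero
        intro i hi
        have hz : b I (i : ℤ) = 0 := hBuch I hI i (by
          rw [← heq]
          push_cast
          omega)
        rw [hz]
        simp
      rw [hLI, hsum0, sub_zero]
      have hd : (n : ℤ) - (rank I : ℤ) - 1 = -1 := by rw [← heq]; ring
      rw [hd]
      have hpar : (-1 : ℚ) ^ (n + rank I) = 1 := by
        rw [← heq, ← two_mul, pow_mul]
        norm_num
      rw [hpar, one_mul]
    · set m : ℕ := n - rank I - 1 with hm
      have hmz : (m : ℤ) = (n : ℤ) - (rank I : ℤ) - 1 := by
        rw [hm]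
        push_cast
        omega
      have hb1 : b I (-1) = 0 := hBuch I hI (-1) (by omega)
      have hsum : ∑ i ∈ range (n + 1), (-1 : ℚ) ^ i * (b I (i : ℤ) : ℚ)
          = (-1 : ℚ) ^ m * (b I (m : ℤ) : ℚ) := by
        apply Finset.sum_eq_single m
        · intro i _ hne
          have hz : b I (i : ℤ) = 0 := hBuch I hI i (by
            rw [← hmz]
            exact_mod_cast hne)
          rw [hz]
          simp
        · intro h
          exact absurd (Finset.mem_range.mpr (by omega)) h
      rw [hLI, hb1, hsum, hmz]
      have hpow : (-1 : ℚ) ^ (n + rank I) = -(-1 : ℚ) ^ m := by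
        have h1 : n + rank I = m + 1 + 2 * rank I := by omega
        rw [h1, pow_add, pow_mul]
        norm_num [pow_succ]
      rw [hpow]
      push_cast
      ring
  -- the k+1 terms
  have hck : ∀ k ∈ range n,
      C (∑ I ∈ univ.filter (fun I : α => rank I = k + 1), L I) * (X + 1) ^ (k + 1)
      = C ((-1 : ℚ) ^ n) * (C (∑ I ∈ univ.filter (fun I : α => rank I = k + 1),
            (b I ((n : ℤ) - (rank I : ℤ) - 1) : ℚ)) * (-X - 1) ^ (k + 1)) := by
    intro k hk
    have hsum : ∑ I ∈ univ.filter (fun I : α => rank I = k + 1), L I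
        = (-1 : ℚ) ^ (n + (k + 1)) * ∑ I ∈ univ.filter (fun I : α => rank I = k + 1),
            (b I ((n : ℤ) - (rank I : ℤ) - 1) : ℚ) := by
      rw [Finset.mul_sum]
      apply Finset.sum_congr rfl
      intro I hI
      have hrI := (Finset.mem_filter.mp hI).2
      have hIb : I ≠ bot := fun h => by
        rw [h, hrankbot] at hrI
        omega
      rw [hLval I hIb, hrI]
    rw [hsum, map_mul]
    have h1 : (C ((-1 : ℚ) ^ (n + (k + 1))) : ℚ[X]) = (-1 : ℚ[X]) ^ (n + (k + 1)) := by
      rw [map_pow, map_neg, map_one]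
    have h2 : (C ((-1 : ℚ) ^ n) : ℚ[X]) = (-1 : ℚ[X]) ^ n := by
      rw [map_pow, map_neg, map_one]
    have h3 : (-X - 1 : ℚ[X]) ^ (k + 1) = (-1 : ℚ[X]) ^ (k + 1) * (X + 1) ^ (k + 1) := by
      rw [← mul_pow]
      congr 1
      ring
    rw [h1, h2, h3, pow_add]
    ring
  rw [Finset.sum_congr rfl hck, ← Finset.mul_sum, hc0]
  ring
end

section
/- Let S be a Buchsbaum simplicial poset of dimension n-1 that is a homology manifold, meaning additionally f~_k(S) = f_k(S) for all k (each link has top reduced homology of rank 1). Then f_S(t) = (1 - (-1)^n - chi(S)) + (-1)^n f_S(-t-1), and consequently the h-vector satisfies h_i = h_{n-i} + (-1)^i binomial(n,i) (1 - (-1)^n - chi(S)). -/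
open Polynomial Finset

-- strictly monotone function on Finset (Fin m) grows at least by card
lemma aux_grow {m : ℕ} (φ : Finset (Fin m) → ℕ) (hφ : StrictMono φ) :
    ∀ (k : ℕ) (s t : Finset (Fin m)), s ⊆ t → t.card - s.card = k → φ s + k ≤ φ t := by
  intro k
  induction k with
  | zero => intro s t hst hk; have : s = t := Finset.eq_of_subset_of_card_le hst (by omega)
            subst this; omega
  | succ k ih =>
    intro s t hst hk
    have hne : s ≠ t := by intro h; subst h; omega
    have hss : s ⊂ t := hst.ssubset_of_ne hne
    obtain ⟨a, hat, has⟩ := Finset.exists_of_ssubset hss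
    have h1 : insert a s ⊆ t := Finset.insert_subset hat hst
    have hcard : (insert a s).card = s.card + 1 := Finset.card_insert_of_notMem has
    have hlt : φ s < φ (insert a s) := hφ (Finset.ssubset_insert has)
    have hc2 : s.card < t.card := Finset.card_lt_card hss
    have := ih (insert a s) t h1 (by omega)
    omega

lemma aux_card {m : ℕ} (φ : Finset (Fin m) → ℕ) (hφ : StrictMono φ)
    (h0 : φ ∅ = 0) (hu : φ Finset.univ = m) (s : Finset (Fin m)) : φ s = s.card := by
  have h1 := aux_grow φ hφ s.card ∅ s (Finset.empty_subset s) (by simp)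
  have hcle : s.card ≤ m := by
    have := Finset.card_le_card (Finset.subset_univ s); simpa using this
  have h2 := aux_grow φ hφ (m - s.card) s Finset.univ (Finset.subset_univ s) (by simp)
  rw [hu] at h2
  omega

lemma bool_rank_card {α : Type} [PartialOrder α]
    (rank : α → ℕ) (bot : α) (hbot : ∀ I, bot ≤ I) (hrankbot : rank bot = 0)
    (hmono : ∀ I J : α, I < J → rank I < rank J)
    (I : α) (e : {J : α // J ≤ I} ≃o Finset (Fin (rank I)))
    (J : α) (hJ : J ≤ I) : rank J = (e ⟨J, hJ⟩).card := by
  set φ : Finset (Fin (rank I)) → ℕ := fun s => rank (e.symm s).val with hφdef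
  have hφ : StrictMono φ := by
    intro s t hst
    exact hmono _ _ (by exact_mod_cast (e.symm.strictMono hst))
  have hbote : e.symm ∅ = ⟨bot, hbot I⟩ := by
    apply le_antisymm
    · have : (∅ : Finset (Fin (rank I))) ≤ e ⟨bot, hbot I⟩ := by simp
      simpa using e.symm.monotone this
    · exact hbot _
  have hie : e.symm Finset.univ = ⟨I, le_refl I⟩ := by
    apply le_antisymm
    · exact (e.symm Finset.univ).2
    · have : e ⟨I, le_refl I⟩ ≤ (Finset.univ : Finset (Fin (rank I))) := Finset.subset_univ _
      simpa using e.symm.monotone this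
  have h0 : φ ∅ = 0 := by rw [hφdef]; simp [hbote, hrankbot]
  have hu : φ Finset.univ = rank I := by rw [hφdef]; simp [hie]
  have h2 := aux_card φ hφ h0 hu (e ⟨J, hJ⟩)
  have h3 : φ (e ⟨J, hJ⟩) = rank J := by simp [hφdef]
  rw [h3] at h2
  exact h2


lemma sum_finset_pow (m : ℕ) : ∑ s : Finset (Fin m), (X : ℚ[X]) ^ s.card = (1 + X) ^ m := by
  have h := Finset.prod_add (fun _ => (X : ℚ[X])) (fun _ => (1 : ℚ[X])) (Finset.univ : Finset (Fin m))
  simp only [Finset.prod_const, Finset.prod_const_one, one_pow, mul_one,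
    Finset.powerset_univ, Finset.card_univ, Fintype.card_fin] at h
  rw [add_comm] at h
  exact h.symm

lemma interval_sum {α : Type} [Fintype α] [PartialOrder α] [DecidableEq α]
    (rank : α → ℕ) (bot : α) (hbot : ∀ I, bot ≤ I) (hrankbot : rank bot = 0)
    (hmono : ∀ I J : α, I < J → rank I < rank J)
    (I : α) (e : {J : α // J ≤ I} ≃o Finset (Fin (rank I)))
    [DecidablePred (fun J : α => J ≤ I)] :
    ∑ J ∈ Finset.univ.filter (fun J : α => J ≤ I), (X : ℚ[X]) ^ (rank J)
      = (1 + X) ^ (rank I) := by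
  classical
  rw [Finset.sum_subtype (p := fun J : α => J ≤ I) (Finset.univ.filter (fun J : α => J ≤ I))
      (fun x => by simp) (fun J => (X : ℚ[X]) ^ (rank J))]
  rw [Fintype.sum_equiv e.toEquiv _ (fun s => (X : ℚ[X]) ^ s.card)
      (fun a => by rw [bool_rank_card rank bot hbot hrankbot hmono I e a.1 a.2]; rfl)]
  exact sum_finset_pow (rank I)

lemma comp_sum {β : Type} (s : Finset β) (f : β → ℚ[X]) (q : ℚ[X]) :
    (∑ i ∈ s, f i).comp q = ∑ i ∈ s, (f i).comp q := by
  simp only [Polynomial.comp]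
  exact Polynomial.eval₂_finset_sum _ _ _ _

theorem main_part1 {α : Type} [Fintype α] [PartialOrder α] [DecidableEq α]
    [DecidableRel ((· < ·) : α → α → Prop)]
    (rank : α → ℕ) (bot : α) (hbot : ∀ I, bot ≤ I) (hrankbot : rank bot = 0)
    (hbool : ∀ I : α, Nonempty ({J : α // J ≤ I} ≃o Finset (Fin (rank I))))
    (hmono : ∀ I J : α, I < J → rank I < rank J)
    (n : ℕ)
    (hdim : ∀ I, rank I ≤ n)
    (b : α → ℤ → ℕ)
    (hBuch : ∀ I, I ≠ bot → ∀ i : ℤ, i ≠ (n : ℤ) - (rank I : ℤ) - 1 → b I i = 0)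
    (hEuler : ∀ I, I ≠ bot →
      (∑ J ∈ Finset.univ.filter (fun J : α => I < J), (-1 : ℚ) ^ (rank J - rank I - 1)) - 1
        = -(b I (-1) : ℚ) + ∑ i ∈ range (n + 1), (-1 : ℚ) ^ i * (b I (i : ℤ) : ℚ))
    (hman : ∀ k : ℕ,
      (∑ I ∈ Finset.univ.filter (fun I : α => rank I = k + 1),
          (b I ((n : ℤ) - (rank I : ℤ) - 1) : ℚ))
        = ((Finset.univ.filter (fun I : α => rank I = k + 1)).card : ℚ))
    (chi : ℚ)
    (hchi : chi = ∑ i ∈ range n, (-1 : ℚ) ^ i *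
        ((Finset.univ.filter (fun I : α => rank I = i + 1)).card : ℚ)) :
    ((∑ I : α, (X : Polynomial ℚ) ^ (rank I))
        = C (1 - (-1 : ℚ) ^ n - chi)
          + C ((-1 : ℚ) ^ n) * (∑ I : α, (X : Polynomial ℚ) ^ (rank I)).comp (-X - 1)) := by
  classical
  set F : ℚ[X] := ∑ I : α, X ^ rank I with hF
  -- basic facts
  have hrank0 : ∀ I : α, rank I = 0 → I = bot := by
    intro I hI
    by_contra hne
    have hlt : bot < I := lt_of_le_of_ne (hbot I) (Ne.symm hne)
    have := hmono bot I hlt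
    omega
  have hfilt0 : Finset.univ.filter (fun I : α => rank I = 0) = {bot} := by
    ext I
    simp only [Finset.mem_filter, Finset.mem_univ, true_and, Finset.mem_singleton]
    constructor
    · exact hrank0 I
    · rintro rfl; exact hrankbot
  have hcard0 : (Finset.univ.filter (fun I : α => rank I = 0)).card = 1 := by
    rw [hfilt0]; rfl
  -- fiber decomposition
  have hfib : ∀ {M : Type} [AddCommMonoid M] (g : α → M),
      (∑ I : α, g I) = ∑ i ∈ range (n+1),
        ∑ I ∈ Finset.univ.filter (fun I : α => rank I = i), g I := by
    intro M _ g
    rw [Finset.sum_fiberwise_of_maps_to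
      (fun I _ => Finset.mem_range.mpr (Nat.lt_succ_of_le (hdim I))) g]
  have hFfib : F = ∑ i ∈ range (n+1),
      C (((Finset.univ.filter (fun I : α => rank I = i)).card : ℚ)) * X ^ i := by
    rw [hF, hfib (fun I => (X : ℚ[X]) ^ rank I)]
    refine Finset.sum_congr rfl (fun i _ => ?_)
    have hterm : ∑ I ∈ Finset.univ.filter (fun I : α => rank I = i), (X:ℚ[X]) ^ rank I
        = ∑ _I ∈ Finset.univ.filter (fun I : α => rank I = i), (X:ℚ[X]) ^ i :=
      Finset.sum_congr rfl (fun I hI => by rw [(Finset.mem_filter.mp hI).2])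
    rw [hterm, Finset.sum_const, nsmul_eq_mul]
    simp
  -- the weights
  set wq : α → ℚ := fun J => ∑ I ∈ Finset.univ.filter (fun I : α => J ≤ I), (-1:ℚ) ^ (rank I)
    with hwqdef
  have hwq : ∀ J : α, J ≠ bot →
      wq J = (-1:ℚ)^n * (b J ((n:ℤ) - (rank J:ℤ) - 1) : ℚ) := by
    intro J hJ
    have hsplit : Finset.univ.filter (fun I : α => J ≤ I)
        = insert J (Finset.univ.filter (fun I : α => J < I)) := by
      ext I
      simp only [Finset.mem_filter, Finset.mem_univ, true_and, Finset.mem_insert]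
      constructor
      · intro hle
        rcases eq_or_lt_of_le hle with h1 | h1
        · left; exact h1.symm
        · right; exact h1
      · rintro (rfl | h1)
        · exact le_refl I
        · exact le_of_lt h1
    have hJnm : J ∉ Finset.univ.filter (fun I : α => J < I) := by simp
    have hw1 : wq J = (-1:ℚ)^(rank J)
        + ∑ I ∈ Finset.univ.filter (fun I : α => J < I), (-1:ℚ)^(rank I) := by
      rw [hwqdef]; simp only []; rw [hsplit, Finset.sum_insert hJnm]
    have hw2 : ∑ I ∈ Finset.univ.filter (fun I : α => J < I), (-1:ℚ)^(rank I)
        = (-1:ℚ)^(rank J + 1)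
          * ∑ I ∈ Finset.univ.filter (fun I : α => J < I), (-1:ℚ)^(rank I - rank J - 1) := by
      rw [Finset.mul_sum]
      refine Finset.sum_congr rfl (fun I hI => ?_)
      have hlt : J < I := (Finset.mem_filter.mp hI).2
      have hr : rank J < rank I := hmono J I hlt
      rw [← pow_add]
      congr 1
      omega
    have hE := hEuler J hJ
    rcases eq_or_lt_of_le (hdim J) with hr | hr
    · -- rank J = n
      have hzero : ∀ i ∈ range (n+1), (-1:ℚ)^i * (b J (i:ℤ) : ℚ) = 0 := by
        intro i _
        rw [hBuch J hJ i (by rw [← hr]; push_cast; omega)]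
        simp
      rw [Finset.sum_eq_zero hzero] at hE
      have hbn : ((n:ℤ) - (rank J:ℤ) - 1) = -1 := by rw [← hr]; ring
      rw [hbn]
      have hEsum : ∑ I ∈ Finset.univ.filter (fun I : α => J < I),
          (-1:ℚ)^(rank I - rank J - 1) = 1 - (b J (-1) : ℚ) := by linarith
      rw [hw1, hw2, hEsum, ← hr]
      rw [pow_succ]
      ring
    · -- rank J < n
      have hk0 : n - rank J - 1 ∈ range (n+1) := by
        rw [Finset.mem_range]; omega
      have hk0z : ((n - rank J - 1 : ℕ) : ℤ) = (n:ℤ) - (rank J:ℤ) - 1 := by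
        push_cast [Nat.cast_sub (by omega : rank J + 1 ≤ n)]
        omega
      have hsum1 : ∑ i ∈ range (n+1), (-1:ℚ)^i * (b J (i:ℤ) : ℚ)
          = (-1:ℚ)^(n - rank J - 1) * (b J ((n:ℤ) - (rank J:ℤ) - 1) : ℚ) := by
        rw [Finset.sum_eq_single_of_mem (n - rank J - 1) hk0]
        · rw [hk0z]
        · intro i hi hne
          have hi' := Finset.mem_range.mp hi
          rw [hBuch J hJ i (by omega)]
          simp
      have hbneg : (b J (-1) : ℚ) = 0 := by
        rw [hBuch J hJ (-1) (by omega)]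
        simp
      rw [hsum1, hbneg] at hE
      have hEsum : ∑ I ∈ Finset.univ.filter (fun I : α => J < I),
          (-1:ℚ)^(rank I - rank J - 1)
          = 1 + (-1:ℚ)^(n - rank J - 1) * (b J ((n:ℤ) - (rank J:ℤ) - 1) : ℚ) := by
        linarith
      have hexp : (-1:ℚ)^(rank J + 1) * (-1:ℚ)^(n - rank J - 1) = (-1:ℚ)^n := by
        rw [← pow_add]
        congr 1
        omega
      rw [hw1, hw2, hEsum, mul_add, mul_one, ← mul_assoc, hexp, pow_succ]
      ring
  -- weight at bot
  have hwbot : wq bot = 1 - chi := by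
    have huniv : Finset.univ.filter (fun I : α => bot ≤ I) = Finset.univ := by
      ext I; simp [hbot I]
    have h1 : wq bot = ∑ I : α, (-1:ℚ)^(rank I) := by
      rw [hwqdef]; simp only []; rw [huniv]
    have h2 : ∀ i : ℕ, ∑ I ∈ Finset.univ.filter (fun I : α => rank I = i), (-1:ℚ)^(rank I)
        = (-1:ℚ)^i * ((Finset.univ.filter (fun I : α => rank I = i)).card : ℚ) := by
      intro i
      calc ∑ I ∈ Finset.univ.filter (fun I : α => rank I = i), (-1:ℚ)^(rank I)
          = ∑ _I ∈ Finset.univ.filter (fun I : α => rank I = i), (-1:ℚ)^i :=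
            Finset.sum_congr rfl (fun I hI => by rw [(Finset.mem_filter.mp hI).2])
        _ = _ := by rw [Finset.sum_const, nsmul_eq_mul]; ring
    rw [h1, hfib (fun I => (-1:ℚ)^(rank I)), Finset.sum_congr rfl (fun i _ => h2 i),
      Finset.sum_range_succ']
    rw [hchi]
    have h3 : ∀ i ∈ range n, (-1:ℚ)^(i+1)
          * ((Finset.univ.filter (fun I : α => rank I = i + 1)).card : ℚ)
        = -((-1:ℚ)^i * ((Finset.univ.filter (fun I : α => rank I = i + 1)).card : ℚ)) := by
      intro i _; rw [pow_succ]; ring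
    rw [Finset.sum_congr rfl h3, Finset.sum_neg_distrib, hcard0]
    simp only [pow_zero, Nat.cast_one, one_mul, mul_one]
    ring
  -- the composed polynomial
  have hint : ∀ I : α, ∑ J ∈ Finset.univ.filter (fun J : α => J ≤ I), (X : ℚ[X]) ^ (rank J)
      = (1 + X) ^ (rank I) :=
    fun I => interval_sum rank bot hbot hrankbot hmono I (hbool I).some
  have hcomp1 : F.comp (-X - 1) = ∑ J : α, C (wq J) * X ^ (rank J) := by
    rw [hF, comp_sum]
    have hterm : ∀ I : α, ((X : ℚ[X]) ^ rank I).comp (-X - 1)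
        = ∑ J ∈ Finset.univ.filter (fun J : α => J ≤ I),
            C ((-1:ℚ)^(rank I)) * X ^ (rank J) := by
      intro I
      rw [Polynomial.X_pow_comp]
      have hq : (-X - 1 : ℚ[X]) = C (-1) * (1 + X) := by
        rw [map_neg, map_one]; ring
      rw [hq, mul_pow, ← map_pow, ← hint I, Finset.mul_sum]
    rw [Finset.sum_congr rfl (fun I _ => hterm I)]
    have hite : ∀ (P : α → α → Prop) [DecidableRel P] (g : α → α → ℚ[X]),
        (∑ I : α, ∑ J ∈ Finset.univ.filter (fun J => P J I), g I J)
          = ∑ I : α, ∑ J : α, (if P J I then g I J else 0) := by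
      intro P _ g
      exact Finset.sum_congr rfl (fun I _ => Finset.sum_filter _ _)
    rw [hite (fun J I => J ≤ I) (fun I J => C ((-1:ℚ)^(rank I)) * X ^ (rank J)),
      Finset.sum_comm]
    refine Finset.sum_congr rfl (fun J _ => ?_)
    rw [← Finset.sum_filter]
    rw [hwqdef]; simp only []
    rw [map_sum, Finset.sum_mul]
  -- assemble
  have hFtail : F = ∑ k ∈ range n,
      C (((Finset.univ.filter (fun I : α => rank I = k + 1)).card : ℚ)) * X ^ (k+1) + 1 := by
    rw [hFfib, Finset.sum_range_succ', hcard0]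
    simp
  have hcomp2 : F.comp (-X - 1) = C (1 - chi) + C ((-1:ℚ)^n) * (F - 1) := by
    rw [hcomp1, hfib (fun J => C (wq J) * X ^ (rank J))]
    have hfibterm : ∀ i : ℕ, ∑ J ∈ Finset.univ.filter (fun J : α => rank J = i),
          C (wq J) * X ^ (rank J)
        = C (∑ J ∈ Finset.univ.filter (fun J : α => rank J = i), wq J) * X ^ i := by
      intro i
      rw [map_sum, Finset.sum_mul]
      refine Finset.sum_congr rfl (fun J hJ => ?_)
      rw [(Finset.mem_filter.mp hJ).2]
    rw [Finset.sum_congr rfl (fun i _ => hfibterm i), Finset.sum_range_succ']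
    have hbotterm : C (∑ J ∈ Finset.univ.filter (fun J : α => rank J = 0), wq J)
        * (X : ℚ[X]) ^ 0 = C (1 - chi) := by
      rw [hfilt0, Finset.sum_singleton, hwbot]
      simp
    rw [hbotterm]
    have hfibk : ∀ k ∈ range n, C (∑ J ∈ Finset.univ.filter (fun J : α => rank J = k + 1), wq J)
          * (X : ℚ[X]) ^ (k+1)
        = C ((-1:ℚ)^n) * (C (((Finset.univ.filter
            (fun I : α => rank I = k + 1)).card : ℚ)) * X ^ (k+1)) := by
      intro k _
      have hsum : ∑ J ∈ Finset.univ.filter (fun J : α => rank J = k + 1), wq J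
          = (-1:ℚ)^n * ((Finset.univ.filter (fun I : α => rank I = k + 1)).card : ℚ) := by
        rw [Finset.sum_congr rfl (fun J hJ => hwq J (by
          intro hb
          have h0 : rank J = k + 1 := (Finset.mem_filter.mp hJ).2
          rw [hb, hrankbot] at h0
          omega)), ← Finset.mul_sum, hman k]
      rw [hsum, map_mul, mul_assoc]
    rw [Finset.sum_congr rfl hfibk, ← Finset.mul_sum]
    have hFm1 : F - 1 = ∑ k ∈ range n,
        C (((Finset.univ.filter (fun I : α => rank I = k + 1)).card : ℚ)) * X ^ (k+1) := by
      rw [hFtail]; ring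
    rw [← hFm1]
    ring
  have key : F.comp (-X - 1) = C (1 - chi - (-1:ℚ)^n) + C ((-1:ℚ)^n) * F := by
    rw [hcomp2]
    simp only [map_sub, map_add, map_one, map_neg]
    ring
  have hfinal := congrArg (fun p : ℚ[X] => p.comp (-X - 1)) key
  simp only [Polynomial.add_comp, Polynomial.mul_comp, Polynomial.C_comp] at hfinal
  rw [Polynomial.comp_assoc] at hfinal
  have hqq : ((-X - 1 : ℚ[X])).comp (-X - 1) = X := by
    simp [Polynomial.sub_comp, Polynomial.neg_comp, Polynomial.X_comp, Polynomial.one_comp]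
  rw [hqq, Polynomial.comp_X] at hfinal
  rw [show (1 - (-1:ℚ)^n - chi) = (1 - chi - (-1:ℚ)^n) from by ring]
  exact hfinal

lemma reflect_sum {β : Type} (N : ℕ) (s : Finset β) (f : β → ℚ[X]) :
    reflect N (∑ i ∈ s, f i) = ∑ i ∈ s, reflect N (f i) := by
  classical
  induction s using Finset.induction_on with
  | empty => simp
  | insert _ _ h ih => rw [Finset.sum_insert h, Finset.sum_insert h, reflect_add, ih]

lemma reflect_one_sub_pow (m : ℕ) : reflect m ((1 - X : ℚ[X]) ^ m) = (X - 1) ^ m := by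
  induction m with
  | zero => simpa using reflect_C (1:ℚ) 0
  | succ m ih =>
    have hd1 : (1 - X : ℚ[X]).natDegree ≤ 1 := by
      rw [show (1 - X : ℚ[X]) = -(X - C 1) from by rw [map_one]; ring]
      rw [natDegree_neg, natDegree_X_sub_C]
    have hdm : ((1 - X : ℚ[X]) ^ m).natDegree ≤ m := by
      refine le_trans natDegree_pow_le ?_
      calc m * (1 - X : ℚ[X]).natDegree ≤ m * 1 := Nat.mul_le_mul_left m hd1
        _ = m := by omega
    have h1 : reflect 1 (1 - X : ℚ[X]) = X - 1 := by
      rw [show (1 - X : ℚ[X]) = C 1 + C (-1) * X from by rw [map_one, map_neg, map_one]; ring]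
      rw [reflect_add, reflect_C_mul, show (X : ℚ[X]) = X ^ 1 from (pow_one X).symm,
        reflect_monomial, reflect_C]
      rw [revAt_le (le_refl 1)]
      simp
      ring
    have hmul := reflect_mul (1 - X : ℚ[X]) ((1 - X : ℚ[X]) ^ m) hd1 hdm
    rw [show m + 1 = 1 + m from by omega, pow_add, pow_add, pow_one, pow_one, hmul, h1, ih]

lemma coeff_sum_C_mul_X_pow (m : ℕ) (c : ℕ → ℚ) (k : ℕ) (hk : k ≤ m) :
    (∑ i ∈ range (m+1), C (c i) * X ^ i).coeff k = c k := by
  rw [Polynomial.finset_sum_coeff,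
    Finset.sum_eq_single_of_mem k (Finset.mem_range.mpr (by omega))]
  · simp
  · intro i _ hne
    simp [Polynomial.coeff_X_pow, Ne.symm hne]

lemma coeff_one_sub_pow (n i : ℕ) (hi : i ≤ n) :
    ((1 - X : ℚ[X]) ^ n).coeff i = (-1:ℚ)^i * (n.choose i : ℚ) := by
  have h : ((1 : ℚ[X]) - X) ^ n
      = ∑ k ∈ range (n+1), C ((-1:ℚ)^k * (n.choose k : ℚ)) * X ^ k := by
    rw [sub_eq_add_neg, add_comm, add_pow]
    refine Finset.sum_congr rfl fun k _ => ?_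
    rw [neg_pow, one_pow, map_mul, map_pow, map_neg, map_one, Polynomial.C_eq_natCast]
    ring
  rw [h, coeff_sum_C_mul_X_pow n _ i hi]

lemma main_part2 (n : ℕ) (c : ℚ) (f : ℕ → ℚ) (h : ℕ → ℚ)
    (hcon : (∑ i ∈ range (n+1), C (f i) * X ^ i)
      = C c + C ((-1:ℚ)^n) * (∑ i ∈ range (n+1), C (f i) * X ^ i).comp (-X - 1))
    (hdef : ∑ i ∈ range (n + 1), C (h i) * X ^ i
      = ∑ i ∈ range (n + 1), C (f i) * X ^ i * (1 - X) ^ (n - i)) :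
    ∀ i ≤ n, h i = h (n - i) + (-1:ℚ)^i * (n.choose i : ℚ) * c := by
  set FF : ℚ[X] := ∑ i ∈ range (n+1), C (f i) * X ^ i with hFF
  set R : ℚ[X] := ∑ i ∈ range (n+1), C (f i) * X ^ i * (1 - X) ^ (n - i) with hR
  set Q : ℚ[X] := ∑ i ∈ range (n+1), C (f i) * (X - 1) ^ (n - i) with hQ
  have hQR : Q = reflect n R := by
    rw [hR, reflect_sum, hQ]
    refine Finset.sum_congr rfl fun i hi => ?_
    have hin : i ≤ n := by have := Finset.mem_range.mp hi; omega
    symm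
    rw [mul_assoc, reflect_C_mul]
    congr 1
    have hdX : ((X : ℚ[X]) ^ i).natDegree ≤ i := natDegree_X_pow_le i
    have hd1 : (1 - X : ℚ[X]).natDegree ≤ 1 := by
      rw [show (1 - X : ℚ[X]) = -(X - C 1) from by rw [map_one]; ring]
      rw [natDegree_neg, natDegree_X_sub_C]
    have hdm : ((1 - X : ℚ[X]) ^ (n - i)).natDegree ≤ n - i := by
      refine le_trans natDegree_pow_le ?_
      calc (n-i) * (1 - X : ℚ[X]).natDegree ≤ (n-i) * 1 := Nat.mul_le_mul_left (n-i) hd1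
        _ = n - i := by omega
    have hmul := reflect_mul ((X : ℚ[X]) ^ i) ((1 - X : ℚ[X]) ^ (n - i)) hdX hdm
    have hn : i + (n - i) = n := by omega
    calc reflect n ((X : ℚ[X]) ^ i * (1 - X) ^ (n - i))
        = reflect (i + (n - i)) ((X : ℚ[X]) ^ i * (1 - X) ^ (n - i)) := by rw [hn]
      _ = reflect i ((X : ℚ[X]) ^ i) * reflect (n - i) ((1 - X : ℚ[X]) ^ (n - i)) := hmul
      _ = (X - 1) ^ (n - i) := by
          rw [reflect_monomial, revAt_le (le_refl i), reflect_one_sub_pow]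
          simp
  have hFe : ∀ x : ℚ, FF.eval x = ∑ i ∈ range (n+1), f i * x ^ i := by
    intro x
    rw [hFF, Polynomial.eval_finset_sum]
    exact Finset.sum_congr rfl fun i _ => by simp
  have hroot : ∀ a : ℚ, a ≠ 1 → (R - (C c * (1 - X) ^ n + Q)).eval a = 0 := by
    intro a ha
    have h1a : (1:ℚ) - a ≠ 0 := sub_ne_zero.mpr (Ne.symm ha)
    set t : ℚ := a / (1 - a) with ht
    have hta : (1 - a) * t = a := by
      rw [ht, mul_div_cancel₀ _ h1a]
    have hmt : (a - 1) * (-t - 1) = 1 := by linear_combination hta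
    have hev := congrArg (Polynomial.eval t) hcon
    simp only [Polynomial.eval_add, Polynomial.eval_mul, Polynomial.eval_C,
      Polynomial.eval_comp, Polynomial.eval_sub, Polynomial.eval_neg, Polynomial.eval_X,
      Polynomial.eval_one] at hev
    have hRe : R.eval a = ∑ i ∈ range (n+1), f i * (a ^ i * (1-a) ^ (n - i)) := by
      rw [hR, Polynomial.eval_finset_sum]
      exact Finset.sum_congr rfl fun i _ => by simp [mul_assoc]
    have hQe : Q.eval a = ∑ i ∈ range (n+1), f i * (a - 1) ^ (n - i) := by
      rw [hQ, Polynomial.eval_finset_sum]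
      exact Finset.sum_congr rfl fun i _ => by simp
    have e1 : R.eval a = (1-a)^n * FF.eval t := by
      rw [hRe, hFe, Finset.mul_sum]
      refine Finset.sum_congr rfl fun i hi => ?_
      have hin : i ≤ n := by have := Finset.mem_range.mp hi; omega
      rw [show a ^ i = (1-a)^i * t^i from by rw [← mul_pow, hta],
        show ((1-a):ℚ)^n = (1-a)^(n-i) * (1-a)^i from by rw [← pow_add]; congr 1; omega]
      ring
    have e2 : Q.eval a = (-1:ℚ)^n * ((1-a)^n * FF.eval (-t-1)) := by
      rw [hQe, hFe, Finset.mul_sum, Finset.mul_sum]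
      refine Finset.sum_congr rfl fun i hi => ?_
      have hin : i ≤ n := by have := Finset.mem_range.mp hi; omega
      have h4 : ((a-1):ℚ)^(n-i) = (a-1)^n * (-t-1)^i := by
        rw [show ((a-1):ℚ)^n = (a-1)^(n-i) * (a-1)^i from by rw [← pow_add]; congr 1; omega,
          mul_assoc, ← mul_pow, hmt, one_pow, mul_one]
      rw [h4, show ((a-1):ℚ)^n = (-1:ℚ)^n * (1-a)^n from by
        rw [show ((a-1):ℚ) = -(1-a) from by ring, neg_pow]]
      ring
    rw [Polynomial.eval_sub, Polynomial.eval_add, Polynomial.eval_mul, Polynomial.eval_C,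
      Polynomial.eval_pow, Polynomial.eval_sub, Polynomial.eval_one, Polynomial.eval_X,
      e1, e2]
    linear_combination ((1-a):ℚ)^n * hev
  have hD : R - (C c * (1 - X) ^ n + Q) = 0 := by
    apply Polynomial.eq_zero_of_infinite_isRoot
    apply Set.Infinite.mono (s := {x : ℚ | x ≠ 1})
    · intro a ha
      exact hroot a ha
    · have : ({x : ℚ | x ≠ 1}) = ({1} : Set ℚ)ᶜ := by ext x; simp
      rw [this]
      exact (Set.finite_singleton (1:ℚ)).infinite_compl
  have hReq : R = C c * (1 - X) ^ n + Q := by linear_combination hD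
  have hcoeffR : ∀ k, k ≤ n → h k = R.coeff k := by
    intro k hk
    rw [← coeff_sum_C_mul_X_pow n h k hk, hdef]
  intro i hi
  rw [hcoeffR i hi]
  conv_lhs => rw [hReq]
  rw [Polynomial.coeff_add, Polynomial.coeff_C_mul, coeff_one_sub_pow n i hi, hQR,
    Polynomial.coeff_reflect, revAt_le hi, ← hcoeffR (n - i) (by omega)]
  ring

lemma F_fib {α : Type} [Fintype α] [DecidableEq α] (rank : α → ℕ) (n : ℕ)
    (hdim : ∀ I, rank I ≤ n) :
    (∑ I : α, (X : ℚ[X]) ^ rank I)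
      = ∑ i ∈ range (n+1),
          C (((Finset.univ.filter (fun I : α => rank I = i)).card : ℚ)) * X ^ i := by
  rw [← Finset.sum_fiberwise_of_maps_to
    (fun I (_ : I ∈ Finset.univ) => Finset.mem_range.mpr (Nat.lt_succ_of_le (hdim I)))
    (fun I => (X : ℚ[X]) ^ rank I)]
  refine Finset.sum_congr rfl fun i _ => ?_
  have hterm : ∑ I ∈ Finset.univ.filter (fun I : α => rank I = i), (X : ℚ[X]) ^ rank I
      = ∑ _I ∈ Finset.univ.filter (fun I : α => rank I = i), (X : ℚ[X]) ^ i :=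
    Finset.sum_congr rfl (fun I hI => by rw [(Finset.mem_filter.mp hI).2])
  rw [hterm, Finset.sum_const, nsmul_eq_mul]
  simp

/-- Let `S` be a Buchsbaum simplicial poset of dimension `n-1` which is a homology manifold,
i.e. `f~_k(S) = f_k(S)` for all `k` (each link has top reduced homology of rank 1).  Then
the `f`-polynomial satisfies `f_S(t) = (1 - (-1)^n - χ(S)) + (-1)^n f_S(-t-1)`, and
consequently the `h`-vector satisfies
`h_i = h_{n-i} + (-1)^i C(n,i) (1 - (-1)^n - χ(S))`. -/
theorem homology_manifold_dehn_sommerville {α : Type} [Fintype α] [PartialOrder α] [DecidableEq α]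
    [DecidableRel ((· < ·) : α → α → Prop)]
    (rank : α → ℕ) (bot : α) (hbot : ∀ I, bot ≤ I) (hrankbot : rank bot = 0)
    (hbool : ∀ I : α, Nonempty ({J : α // J ≤ I} ≃o Finset (Fin (rank I))))
    (hmono : ∀ I J : α, I < J → rank I < rank J)
    (n : ℕ)
    (hdim : ∀ I, rank I ≤ n)
    (hdimtop : ∃ I, rank I = n)
    (b : α → ℤ → ℕ)
    (hBuch : ∀ I, I ≠ bot → ∀ i : ℤ, i ≠ (n : ℤ) - (rank I : ℤ) - 1 → b I i = 0)
    (hEuler : ∀ I, I ≠ bot →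
      (∑ J ∈ Finset.univ.filter (fun J : α => I < J), (-1 : ℚ) ^ (rank J - rank I - 1)) - 1
        = -(b I (-1) : ℚ) + ∑ i ∈ range (n + 1), (-1 : ℚ) ^ i * (b I (i : ℤ) : ℚ))
    (hman : ∀ k : ℕ,
      (∑ I ∈ Finset.univ.filter (fun I : α => rank I = k + 1),
          (b I ((n : ℤ) - (rank I : ℤ) - 1) : ℚ))
        = ((Finset.univ.filter (fun I : α => rank I = k + 1)).card : ℚ))
    (chi : ℚ)
    (hchi : chi = ∑ i ∈ range n, (-1 : ℚ) ^ i *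
        ((Finset.univ.filter (fun I : α => rank I = i + 1)).card : ℚ))
    (h : ℕ → ℚ)
    (hdef : ∑ i ∈ range (n + 1), C (h i) * X ^ i
      = ∑ i ∈ range (n + 1),
          C (((Finset.univ.filter (fun I : α => rank I = i)).card : ℚ)) * X ^ i * (1 - X) ^ (n - i)) :
    ((∑ I : α, (X : Polynomial ℚ) ^ (rank I))
        = C (1 - (-1 : ℚ) ^ n - chi)
          + C ((-1 : ℚ) ^ n) * (∑ I : α, (X : Polynomial ℚ) ^ (rank I)).comp (-X - 1))
    ∧ ∀ i ≤ n, h i = h (n - i) + (-1 : ℚ) ^ i * (n.choose i : ℚ) * (1 - (-1 : ℚ) ^ n - chi) := by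
  have hpart1 := main_part1 rank bot hbot hrankbot hbool hmono n hdim b hBuch hEuler hman chi hchi
  refine ⟨hpart1, ?_⟩
  have hFfib := F_fib rank n hdim
  have hcon : (∑ i ∈ range (n+1),
        C (((Finset.univ.filter (fun I : α => rank I = i)).card : ℚ)) * X ^ i)
      = C (1 - (-1:ℚ)^n - chi) + C ((-1:ℚ)^n)
          * (∑ i ∈ range (n+1),
              C (((Finset.univ.filter (fun I : α => rank I = i)).card : ℚ)) * X ^ i).comp
            (-X - 1) := by
    rw [← hFfib]
    exact hpart1
  exact main_part2 n (1 - (-1:ℚ)^n - chi)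
    (fun i => (((Finset.univ.filter (fun I : α => rank I = i)).card : ℚ))) h hcon hdef
end

section
/- Let S be a Buchsbaum simplicial poset of dimension n-1 with reduced Betti numbers b~_p(S), and define f~_k(S) = Σ_{dim I = k} dim H~_{n-1-|I|}(lk_S I). Let χ¹_q = Σ_{p=0}^{n-1} (-1)^p binomial(p,q) f~_{n-p-1}(S). Then for q ≤ n-1, χ¹_q = (chi(S) - 1) binomial(n,q) + (-1)^q h_q(S). -/
open Polynomial Finset

private lemma neg_one_pow_congr_aux (a c : ℕ) (h : a % 2 = c % 2) : (-1:ℚ)^a = (-1:ℚ)^c := by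
  conv_lhs => rw [← Nat.div_add_mod a 2]
  conv_rhs => rw [← Nat.div_add_mod c 2]
  rw [pow_add, pow_add, pow_mul, pow_mul]
  norm_num [h]

private lemma strictMono_finset_card {N : ℕ} (g : Finset (Fin N) → ℕ)
    (hg : ∀ s t, s ⊂ t → g s < g t) (h0 : g ∅ = 0) (hU : g Finset.univ = N) :
    ∀ s, g s = s.card := by
  have key : ∀ d s t, s ⊆ t → t.card = s.card + d → g s + d ≤ g t := by
    intro d
    induction d with
    | zero =>
      intro s t hst hc
      rw [Finset.eq_of_subset_of_card_le hst (by omega)]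
      omega
    | succ d ih =>
      intro s t hst hc
      obtain ⟨x, hx⟩ : (t \ s).Nonempty := by
        rw [Finset.sdiff_nonempty]
        intro hts
        have := Finset.Subset.antisymm hst hts
        subst this; omega
      rw [Finset.mem_sdiff] at hx
      have h1 : insert x s ⊆ t := Finset.insert_subset hx.1 hst
      have h2 : (insert x s).card = s.card + 1 := Finset.card_insert_of_notMem hx.2
      have h3 := ih (insert x s) t h1 (by omega)
      have h4 : g s < g (insert x s) := hg _ _ (Finset.ssubset_insert hx.2)
      omega
  intro s
  have hcard : s.card ≤ N := by
    simpa using Finset.card_le_univ s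
  have hs1 := key s.card ∅ s (Finset.empty_subset s) (by simp)
  have hs2 := key (N - s.card) s Finset.univ (Finset.subset_univ s)
    (by simp only [Finset.card_univ, Fintype.card_fin]; omega)
  omega

private lemma count_rank_le {α : Type} [Fintype α] [PartialOrder α] [DecidableEq α]
    (rank : α → ℕ) (bot : α) (hbot : ∀ I, bot ≤ I) (hrankbot : rank bot = 0)
    (hbool : ∀ I : α, Nonempty ({J : α // J ≤ I} ≃o Finset (Fin (rank I))))
    (hmono : ∀ I J : α, I < J → rank I < rank J)
    (J : α) (r : ℕ) [DecidablePred fun I : α => I ≤ J ∧ rank I = r] :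
    (Finset.univ.filter fun I : α => I ≤ J ∧ rank I = r).card = (rank J).choose r := by
  obtain ⟨e⟩ := hbool J
  -- the rank function transported to finsets
  have hgval : ∀ s : Finset (Fin (rank J)), rank ((e.symm s : {K : α // K ≤ J}) : α) = s.card := by
    apply strictMono_finset_card
    · intro s t hst
      apply hmono
      have h1 : e.symm s < e.symm t := e.symm.strictMono hst
      exact h1
    · -- g ∅ = 0 : e.symm ∅ = bot
      have h1 : e ⟨bot, hbot J⟩ ≤ e (e.symm ∅) := e.monotone (Subtype.coe_le_coe.mp (hbot _))
      rw [OrderIso.apply_symm_apply] at h1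
      have h2 : e ⟨bot, hbot J⟩ = ∅ := Finset.subset_empty.mp h1
      have h3 : e.symm (∅ : Finset (Fin (rank J))) = ⟨bot, hbot J⟩ := by
        rw [← h2, OrderIso.symm_apply_apply]
      rw [h3]
      exact hrankbot
    · -- g univ = rank J
      have h1 : e (e.symm Finset.univ) ≤ e ⟨J, le_refl J⟩ := e.monotone (Subtype.coe_le_coe.mp (e.symm Finset.univ).2)
      rw [OrderIso.apply_symm_apply] at h1
      have h2 : e ⟨J, le_refl J⟩ = Finset.univ := Finset.univ_subset_iff.mp h1
      have h3 : e.symm (Finset.univ : Finset (Fin (rank J))) = ⟨J, le_refl J⟩ := by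
        rw [← h2, OrderIso.symm_apply_apply]
      rw [h3]
  have hrank : ∀ (I : α) (hI : I ≤ J), rank I = (e ⟨I, hI⟩).card := by
    intro I hI
    have := hgval (e ⟨I, hI⟩)
    rwa [OrderIso.symm_apply_apply] at this
  have hcard2 : (Finset.univ.filter fun s : Finset (Fin (rank J)) => s.card = r).card
      = (rank J).choose r := by
    have h1 : (Finset.univ.filter fun s : Finset (Fin (rank J)) => s.card = r)
        = Finset.powersetCard r Finset.univ := by
      rw [Finset.powersetCard_eq_filter, Finset.powerset_univ]
    rw [h1, Finset.card_powersetCard, Finset.card_univ, Fintype.card_fin]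
  rw [← hcard2]
  apply Finset.card_bij (fun I hI => e ⟨I, (Finset.mem_filter.mp hI).2.1⟩)
  · intro I hI
    rw [Finset.mem_filter]
    refine ⟨Finset.mem_univ _, ?_⟩
    rw [← hrank I (Finset.mem_filter.mp hI).2.1]
    exact (Finset.mem_filter.mp hI).2.2
  · intro I₁ h₁ I₂ h₂ heq
    have := e.injective heq
    exact congrArg Subtype.val this
  · intro s hs
    refine ⟨((e.symm s : {K : α // K ≤ J}) : α), ?_, ?_⟩
    · rw [Finset.mem_filter]
      refine ⟨Finset.mem_univ _, (e.symm s).2, ?_⟩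
      rw [hgval s]
      exact (Finset.mem_filter.mp hs).2
    · rw [Subtype.coe_eta, OrderIso.apply_symm_apply]

private lemma coeff_one_sub_pow_s17 (m k : ℕ) :
    ((1 - X : ℚ[X])^m).coeff k = (-1:ℚ)^k * (m.choose k) := by
  have hexp : (1 - X : ℚ[X])^m = ∑ i ∈ range (m+1), Polynomial.C ((-1:ℚ)^i * (m.choose i)) * X^i := by
    have h := add_pow (-X : ℚ[X]) 1 m
    rw [neg_add_eq_sub] at h
    rw [h]
    refine Finset.sum_congr rfl fun i hi => ?_
    rw [neg_pow]
    simp only [map_mul, map_pow, map_neg, map_one, Polynomial.C_eq_natCast, one_pow]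
    ring
  rw [hexp, finset_sum_coeff]
  simp only [coeff_C_mul, coeff_X_pow, mul_ite, mul_one, mul_zero]
  rw [Finset.sum_ite_eq (range (m+1)) k fun i => (-1:ℚ)^i * (m.choose i)]
  by_cases hk : k ≤ m
  · simp [Finset.mem_range, Nat.lt_succ_of_le hk]
  · rw [if_neg (by simp [Finset.mem_range]; omega)]
    rw [Nat.choose_eq_zero_of_lt (by omega)]
    simp

private lemma binom_aux (n q j : ℕ) (hj : j ≤ n) :
    ∑ m ∈ range (j+1), (-1:ℚ)^m * (j.choose m) * ((n-m).choose q)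
      = if j ≤ q then (((n-j).choose (q-j) : ℕ) : ℚ) else 0 := by
  have h1 : ((1 + X : ℚ[X])^(n-j) * X^j).coeff q
      = if j ≤ q then (((n-j).choose (q-j) : ℕ) : ℚ) else 0 := by
    rw [coeff_mul_X_pow']
    split <;> simp [coeff_one_add_X_pow]
  have h2 : (1 + X : ℚ[X])^(n-j) * X^j
      = ∑ m ∈ range (j+1), Polynomial.C ((-1:ℚ)^(m+j) * (j.choose m)) * (1+X)^(n-j+m) := by
    have hX : (X : ℚ[X])^j = ((1+X) - 1)^j := by ring_nf
    rw [hX, sub_pow, Finset.mul_sum]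
    refine Finset.sum_congr rfl fun m hm => ?_
    rw [pow_add]
    simp only [map_mul, map_pow, map_neg, map_one, Polynomial.C_eq_natCast, one_pow]
    ring
  have h3 : ((1 + X : ℚ[X])^(n-j) * X^j).coeff q
      = ∑ m ∈ range (j+1), (-1:ℚ)^(m+j) * (j.choose m) * ((n-j+m).choose q) := by
    rw [h2, finset_sum_coeff]
    refine Finset.sum_congr rfl fun m hm => ?_
    rw [coeff_C_mul, coeff_one_add_X_pow]
  have h4 : ∑ m ∈ range (j+1), (-1:ℚ)^m * (j.choose m) * ((n-m).choose q)
      = ∑ m ∈ range (j+1), (-1:ℚ)^(m+j) * (j.choose m) * ((n-j+m).choose q) := by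
    rw [← Finset.sum_range_reflect (fun m => (-1:ℚ)^(m+j) * (j.choose m) * ((n-j+m).choose q)) (j+1)]
    refine Finset.sum_congr rfl fun i hi => ?_
    rw [Finset.mem_range] at hi
    have e1 : j + 1 - 1 - i = j - i := by omega
    rw [e1]
    have e2 : (-1:ℚ)^(j - i + j) = (-1:ℚ)^i := neg_one_pow_congr_aux _ _ (by omega)
    have e3 : j.choose (j - i) = j.choose i := Nat.choose_symm (by omega)
    have e4 : n - j + (j - i) = n - i := by omega
    rw [e2, e3, e4]
  rw [h4, ← h3, h1]

private lemma core_j (n q j : ℕ) (hj : j ≤ n) (hq : q < n) :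
    ∑ p ∈ range n, (-1:ℚ)^p * (p.choose q : ℚ) * ((-1:ℚ)^(n-j) * ((j.choose (n-p)) : ℚ))
      = -((-1:ℚ)^j * (n.choose q : ℚ))
        + (-1:ℚ)^q * (if j ≤ q then (-1:ℚ)^(q-j) * (((n-j).choose (q-j)) : ℚ) else 0) := by
  have hA := binom_aux n q j hj
  rw [Finset.sum_range_succ'] at hA
  simp only [pow_zero, Nat.choose_zero_right, Nat.cast_one, one_mul, Nat.sub_zero] at hA
  -- hA : (∑ i ∈ range j, (-1)^(i+1) * C(j,i+1) * C(n-(i+1),q)) + C(n,q) = ite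
  have hsub : ∑ i ∈ range j, (-1:ℚ)^(i+1) * ((j.choose (i+1)) : ℚ) * (((n-(i+1)).choose q) : ℚ)
      = ∑ i ∈ range n, (-1:ℚ)^(i+1) * ((j.choose (i+1)) : ℚ) * (((n-(i+1)).choose q) : ℚ) := by
    apply Finset.sum_subset (Finset.range_subset_range.mpr hj)
    intro i _ hi
    rw [Finset.mem_range] at hi
    rw [Nat.choose_eq_zero_of_lt (by omega)]
    simp
  calc ∑ p ∈ range n, (-1:ℚ)^p * (p.choose q : ℚ) * ((-1:ℚ)^(n-j) * ((j.choose (n-p)) : ℚ))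
      = ∑ p ∈ range n, (-1:ℚ)^j * ((-1:ℚ)^(n-p+1-1) * ((j.choose (n-p)) : ℚ) * ((p.choose q) : ℚ)) := by
        refine Finset.sum_congr rfl fun p hp => ?_
        rw [Finset.mem_range] at hp
        have e0 : n - p + 1 - 1 = n - p := by omega
        rw [e0]
        have e : (-1:ℚ)^p * (-1:ℚ)^(n-j) = (-1:ℚ)^j * (-1:ℚ)^(n-p) := by
          rw [← pow_add, ← pow_add]; exact neg_one_pow_congr_aux _ _ (by omega)
        linear_combination ((p.choose q : ℚ) * ((j.choose (n-p)) : ℚ)) * e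
    _ = (-1:ℚ)^j * ∑ p ∈ range n, ((-1:ℚ)^(n-p+1-1) * ((j.choose (n-p)) : ℚ) * ((p.choose q) : ℚ)) := by
        rw [Finset.mul_sum]
    _ = (-1:ℚ)^j * ∑ i ∈ range n, ((-1:ℚ)^(i+1) * ((j.choose (i+1)) : ℚ) * (((n-(i+1)).choose q) : ℚ)) := by
        congr 1
        rw [← Finset.sum_range_reflect
          (fun i => (-1:ℚ)^(i+1) * ((j.choose (i+1)) : ℚ) * (((n-(i+1)).choose q) : ℚ)) n]
        refine Finset.sum_congr rfl fun p hp => ?_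
        rw [Finset.mem_range] at hp
        have e1 : n - 1 - p + 1 = n - p := by omega
        have e2 : n - (n - p) = p := by omega
        rw [e1, e2]
        have e3 : n - p + 1 - 1 = n - p := by omega
        rw [e3]
    _ = (-1:ℚ)^j * ((if j ≤ q then (((n-j).choose (q-j)) : ℚ) else 0) - (n.choose q : ℚ)) := by
        rw [← hsub]
        rw [← hA]
        ring
    _ = -((-1:ℚ)^j * (n.choose q : ℚ))
        + (-1:ℚ)^q * (if j ≤ q then (-1:ℚ)^(q-j) * (((n-j).choose (q-j)) : ℚ) else 0) := by
        split_ifs with hjq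
        · have e : (-1:ℚ)^q * (-1:ℚ)^(q-j) = (-1:ℚ)^j := by
            rw [← pow_add]; exact neg_one_pow_congr_aux _ _ (by omega)
          linear_combination (-(((n-j).choose (q-j)) : ℚ)) * e
        · ring

private lemma sum_b_eq {α : Type} [Fintype α] [PartialOrder α] [DecidableEq α]
    [DecidableRel ((· < ·) : α → α → Prop)]
    (rank : α → ℕ) (bot : α) (hbot : ∀ I, bot ≤ I) (hrankbot : rank bot = 0)
    (hbool : ∀ I : α, Nonempty ({J : α // J ≤ I} ≃o Finset (Fin (rank I))))
    (hmono : ∀ I J : α, I < J → rank I < rank J)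
    (n : ℕ) (hdim : ∀ I, rank I ≤ n)
    (b : α → ℤ → ℕ)
    (hBuch : ∀ I, I ≠ bot → ∀ i : ℤ, i ≠ (n : ℤ) - (rank I : ℤ) - 1 → b I i = 0)
    (hEuler : ∀ I, I ≠ bot →
      (∑ J ∈ Finset.univ.filter (fun J : α => I < J), (-1 : ℚ) ^ (rank J - rank I - 1)) - 1
        = -(b I (-1) : ℚ) + ∑ i ∈ range (n + 1), (-1 : ℚ) ^ i * (b I (i : ℤ) : ℚ))
    (r : ℕ) (hr1 : 1 ≤ r) (hrn : r ≤ n) :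
    ∑ I ∈ Finset.univ.filter (fun I : α => rank I = r), (b I ((n:ℤ) - (rank I : ℤ) - 1) : ℚ)
      = ∑ j ∈ range (n+1), (-1:ℚ)^(n-j) * (j.choose r : ℚ) *
          ((Finset.univ.filter (fun I : α => rank I = j)).card : ℚ) := by
  haveI : DecidableRel ((· ≤ ·) : α → α → Prop) :=
    fun a b => decidable_of_iff _ le_iff_lt_or_eq.symm
  set F : ℕ → ℚ := fun j => ((Finset.univ.filter (fun I : α => rank I = j)).card : ℚ) with hF
  set G : ℕ → ℚ := fun j => (((j.choose r : ℕ) : ℚ) - if j = r then 1 else 0) * (-1:ℚ)^(j - r - 1)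
    with hG
  set B : ℚ := ∑ I ∈ Finset.univ.filter (fun I : α => rank I = r),
    (b I ((n:ℤ) - (rank I : ℤ) - 1) : ℚ) with hBdef
  -- counting elements of rank r strictly below J
  have hcount : ∀ J : α,
      (((Finset.univ.filter fun I : α => rank I = r ∧ I < J).card : ℕ) : ℚ)
        = (((rank J).choose r : ℕ) : ℚ) - (if rank J = r then 1 else 0) := by
    intro J
    by_cases hJ : rank J = r
    · have hempty : (Finset.univ.filter fun I : α => rank I = r ∧ I < J) = ∅ := by
        rw [Finset.filter_eq_empty_iff]
        rintro I - ⟨h1, h2⟩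
        have := hmono I J h2
        omega
      rw [hempty, hJ]
      simp
    · have heq : (Finset.univ.filter fun I : α => rank I = r ∧ I < J)
          = (Finset.univ.filter fun I : α => I ≤ J ∧ rank I = r) := by
        apply Finset.filter_congr
        intro I _
        constructor
        · rintro ⟨h1, h2⟩; exact ⟨le_of_lt h2, h1⟩
        · rintro ⟨h1, h2⟩
          rcases eq_or_lt_of_le h1 with h3 | h3
          · exact absurd (h3 ▸ h2) hJ
          · exact ⟨h2, h3⟩
      rw [heq, count_rank_le rank bot hbot hrankbot hbool hmono J r, if_neg hJ, sub_zero]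
  have hfilt : ∀ I ∈ Finset.univ.filter (fun I : α => rank I = r), I ≠ bot := by
    intro I hI h
    have h2 := (Finset.mem_filter.mp hI).2
    rw [h, hrankbot] at h2
    omega
  have key := Finset.sum_congr rfl (fun I hI => hEuler I (hfilt I hI))
  -- LHS of key
  have hL : ∑ I ∈ Finset.univ.filter (fun I : α => rank I = r),
      ((∑ J ∈ Finset.univ.filter (fun J : α => I < J), (-1 : ℚ) ^ (rank J - rank I - 1)) - 1)
      = (∑ j ∈ range (n+1), F j * G j) - F r := by
    rw [Finset.sum_sub_distrib]
    congr 1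
    · -- double sum
      have d1 : ∀ I ∈ Finset.univ.filter (fun I : α => rank I = r),
          (∑ J ∈ Finset.univ.filter (fun J : α => I < J), (-1 : ℚ) ^ (rank J - rank I - 1))
          = ∑ J ∈ Finset.univ, if rank I = r ∧ I < J then (-1:ℚ)^(rank J - r - 1) else 0 := by
        intro I hI
        have hIr := (Finset.mem_filter.mp hI).2
        rw [Finset.sum_filter]
        refine Finset.sum_congr rfl fun J _ => ?_
        simp [hIr]
      rw [Finset.sum_congr rfl d1, Finset.sum_filter]
      have d2 : ∀ I : α,
          (if rank I = r then
            ∑ J ∈ Finset.univ, if rank I = r ∧ I < J then (-1:ℚ)^(rank J - r - 1) else 0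
          else 0)
          = ∑ J ∈ Finset.univ, if rank I = r ∧ I < J then (-1:ℚ)^(rank J - r - 1) else 0 := by
        intro I
        by_cases h : rank I = r
        · rw [if_pos h]
        · rw [if_neg h]
          symm
          apply Finset.sum_eq_zero
          intro J _
          simp [h]
      rw [Finset.sum_congr rfl (fun I _ => d2 I), Finset.sum_comm]
      have d3 : ∀ J : α,
          (∑ I ∈ Finset.univ, if rank I = r ∧ I < J then (-1:ℚ)^(rank J - r - 1) else 0)
          = G (rank J) := by
        intro J
        rw [← Finset.sum_filter, Finset.sum_const, nsmul_eq_mul, hcount J, hG]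
      rw [Finset.sum_congr rfl (fun J _ => d3 J)]
      rw [← Finset.sum_fiberwise_of_maps_to
        (fun (J : α) (_ : J ∈ Finset.univ) => Finset.mem_range.mpr (Nat.lt_succ_of_le (hdim J)))
        (fun J => G (rank J))]
      refine Finset.sum_congr rfl fun j _ => ?_
      have d4 : ∀ J ∈ Finset.univ.filter (fun J : α => rank J = j), G (rank J) = G j := by
        intro J hJ
        rw [(Finset.mem_filter.mp hJ).2]
      rw [Finset.sum_congr rfl d4, Finset.sum_const, nsmul_eq_mul, mul_comm]
    · rw [Finset.sum_const, nsmul_eq_mul, mul_one, hF]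
  rw [hL] at key
  by_cases hrn' : 1 + r ≤ n
  · -- r < n
    have hR : ∑ I ∈ Finset.univ.filter (fun I : α => rank I = r),
        (-(b I (-1) : ℚ) + ∑ i ∈ range (n + 1), (-1 : ℚ) ^ i * (b I (i : ℤ) : ℚ))
        = (-1:ℚ)^(n-r-1) * B := by
      rw [hBdef, Finset.mul_sum]
      refine Finset.sum_congr rfl fun I hI => ?_
      have hIr := (Finset.mem_filter.mp hI).2
      have hIb : I ≠ bot := hfilt I hI
      have h1 : b I (-1) = 0 := hBuch I hIb (-1) (by rw [hIr]; omega)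
      have h2 : ∑ i ∈ range (n + 1), (-1 : ℚ) ^ i * (b I (i : ℤ) : ℚ)
          = (-1:ℚ)^(n-r-1) * (b I ((n:ℤ) - (rank I : ℤ) - 1) : ℚ) := by
        rw [Finset.sum_eq_single (n - r - 1)]
        · have e : (((n - r - 1 : ℕ) : ℤ)) = (n:ℤ) - (rank I : ℤ) - 1 := by
            rw [hIr]; omega
          rw [e]
        · intro i hi hne
          rw [Finset.mem_range] at hi
          rw [hBuch I hIb i (by rw [hIr]; omega)]
          simp
        · intro hmem
          exact absurd (Finset.mem_range.mpr (by omega)) hmem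
      rw [h1, h2]
      simp
    rw [hR] at key
    have hsq : (-1:ℚ)^(n-r-1) * (-1:ℚ)^(n-r-1) = 1 := by
      rw [← pow_add]
      exact Even.neg_one_pow ⟨n - r - 1, rfl⟩
    have hB' : B = (-1:ℚ)^(n-r-1) * ((∑ j ∈ range (n+1), F j * G j) - F r) := by
      rw [key, ← mul_assoc, hsq, one_mul]
    rw [hB']
    have hδ : (-1:ℚ)^(n-r-1) * F r
        = ∑ j ∈ range (n+1), (if j = r then (-1:ℚ)^(n-r-1) * F j else 0) := by
      rw [Finset.sum_ite_eq' (range (n+1)) r (fun j => (-1:ℚ)^(n-r-1) * F j)]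
      rw [if_pos (Finset.mem_range.mpr (by omega))]
    rw [mul_sub, hδ, Finset.mul_sum, ← Finset.sum_sub_distrib]
    refine Finset.sum_congr rfl fun j hj => ?_
    rw [Finset.mem_range] at hj
    simp only [hG, hF]
    by_cases hjr : j = r
    · rw [if_pos hjr, if_pos hjr]
      subst hjr
      rw [Nat.choose_self, Nat.cast_one]
      have e : n - j = (n - j - 1) + 1 := by omega
      have e2 : (-1:ℚ)^(n-j) = -(-1:ℚ)^(n-j-1) := by
        conv_lhs => rw [e, pow_succ]
        ring
      rw [e2]
      ring
    · rw [if_neg hjr, if_neg hjr]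
      rcases lt_or_gt_of_ne hjr with hlt | hgt
      · rw [Nat.choose_eq_zero_of_lt hlt]
        simp
      · have e : (-1:ℚ)^(n-r-1) * (-1:ℚ)^(j-r-1) = (-1:ℚ)^(n-j) := by
          rw [← pow_add]
          exact neg_one_pow_congr_aux _ _ (by omega)
        linear_combination ((((Finset.univ.filter (fun I : α => rank I = j)).card : ℚ))
          * ((j.choose r : ℕ) : ℚ)) * e
  · -- r = n
    have hreq : r = n := by omega
    subst hreq
    have hR : ∑ I ∈ Finset.univ.filter (fun I : α => rank I = r),
        (-(b I (-1) : ℚ) + ∑ i ∈ range (r + 1), (-1 : ℚ) ^ i * (b I (i : ℤ) : ℚ))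
        = -B := by
      rw [hBdef, ← Finset.sum_neg_distrib]
      refine Finset.sum_congr rfl fun I hI => ?_
      have hIr := (Finset.mem_filter.mp hI).2
      have hIb : I ≠ bot := hfilt I hI
      have h2 : ∑ i ∈ range (r + 1), (-1 : ℚ) ^ i * (b I (i : ℤ) : ℚ) = 0 := by
        apply Finset.sum_eq_zero
        intro i hi
        rw [hBuch I hIb i (by rw [hIr]; omega)]
        simp
      have e : (-1 : ℤ) = (r:ℤ) - (rank I : ℤ) - 1 := by rw [hIr]; omega
      rw [h2, e]
      ring
    rw [hR] at key
    have hD0 : (∑ j ∈ range (r+1), F j * G j) = 0 := by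
      apply Finset.sum_eq_zero
      intro j hj
      rw [Finset.mem_range] at hj
      simp only [hG]
      by_cases hjr : j = r
      · subst hjr
        simp [Nat.choose_self]
      · rw [if_neg hjr, Nat.choose_eq_zero_of_lt (by omega)]
        simp
    rw [hD0] at key
    have hBF : B = F r := by linarith [key]
    rw [hBF]
    rw [Finset.sum_eq_single r]
    · simp [Nat.choose_self, hF]
    · intro j hj hne
      rw [Finset.mem_range] at hj
      rw [Nat.choose_eq_zero_of_lt (by omega)]
      simp
    · intro hmem
      exact absurd (Finset.mem_range.mpr (by omega)) hmem

/-- Let `S` be a Buchsbaum simplicial poset of dimension `n-1`, with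
`f~_k(S) = ∑_{dim I = k} dim H~_{n-1-|I|}(lk_S I)` and
`χ¹_q = ∑_{p=0}^{n-1} (-1)^p C(p,q) f~_{n-p-1}(S)`.  Then for all `q ≤ n-1`,
`χ¹_q = (χ(S) - 1) C(n,q) + (-1)^q h_q(S)`. -/
theorem chi_one_formula {α : Type} [Fintype α] [PartialOrder α] [DecidableEq α]
    [DecidableRel ((· < ·) : α → α → Prop)]
    (rank : α → ℕ) (bot : α) (hbot : ∀ I, bot ≤ I) (hrankbot : rank bot = 0)
    (hbool : ∀ I : α, Nonempty ({J : α // J ≤ I} ≃o Finset (Fin (rank I))))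
    (hmono : ∀ I J : α, I < J → rank I < rank J)
    (n : ℕ)
    (hdim : ∀ I, rank I ≤ n)
    (hdimtop : ∃ I, rank I = n)
    (b : α → ℤ → ℕ)
    (hBuch : ∀ I, I ≠ bot → ∀ i : ℤ, i ≠ (n : ℤ) - (rank I : ℤ) - 1 → b I i = 0)
    (hEuler : ∀ I, I ≠ bot →
      (∑ J ∈ Finset.univ.filter (fun J : α => I < J), (-1 : ℚ) ^ (rank J - rank I - 1)) - 1
        = -(b I (-1) : ℚ) + ∑ i ∈ range (n + 1), (-1 : ℚ) ^ i * (b I (i : ℤ) : ℚ))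
    (chi : ℚ)
    (hchi : chi = ∑ i ∈ range n, (-1 : ℚ) ^ i *
        ((Finset.univ.filter (fun I : α => rank I = i + 1)).card : ℚ))
    (h : ℕ → ℚ)
    (hdef : ∑ i ∈ range (n + 1), C (h i) * X ^ i
      = ∑ i ∈ range (n + 1),
          C (((Finset.univ.filter (fun I : α => rank I = i)).card : ℚ)) * X ^ i * (1 - X) ^ (n - i)) :
    ∀ q < n,
      (∑ p ∈ range n, (-1 : ℚ) ^ p * (p.choose q : ℚ) *
          (∑ I ∈ Finset.univ.filter (fun I : α => rank I = (n - p - 1) + 1),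
            (b I ((n : ℤ) - (rank I : ℤ) - 1) : ℚ)))
        = (chi - 1) * (n.choose q : ℚ) + (-1 : ℚ) ^ q * h q := by
  intro q hq
  -- the f-vector: rank 0 elements
  have hf0 : (Finset.univ.filter (fun I : α => rank I = 0)) = {bot} := by
    ext I
    simp only [Finset.mem_filter, Finset.mem_univ, true_and, Finset.mem_singleton]
    constructor
    · intro hI
      by_contra hne
      have h1 : bot < I := lt_of_le_of_ne (hbot I) (Ne.symm hne)
      have := hmono bot I h1
      omega
    · intro hI; rw [hI, hrankbot]
  -- extract h q from the polynomial identity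
  have hh : h q = ∑ j ∈ range (n+1),
      ((Finset.univ.filter (fun I : α => rank I = j)).card : ℚ) *
        (if j ≤ q then (-1:ℚ)^(q-j) * (((n-j).choose (q-j) : ℕ) : ℚ) else 0) := by
    have hco := congrArg (fun P : ℚ[X] => P.coeff q) hdef
    simp only [finset_sum_coeff] at hco
    have hl : ∑ i ∈ range (n+1), (Polynomial.C (h i) * X ^ i).coeff q = h q := by
      simp only [coeff_C_mul, coeff_X_pow, mul_ite, mul_one, mul_zero]
      rw [Finset.sum_ite_eq (range (n+1)) q h]
      rw [if_pos (Finset.mem_range.mpr (by omega))]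
    rw [hl] at hco
    rw [hco]
    refine Finset.sum_congr rfl fun j hj => ?_
    have hre : Polynomial.C (((Finset.univ.filter (fun I : α => rank I = j)).card : ℚ))
          * X^j * (1-X)^(n-j)
        = Polynomial.C (((Finset.univ.filter (fun I : α => rank I = j)).card : ℚ))
          * ((1-X)^(n-j) * X^j) := by ring
    rw [hre, coeff_C_mul, coeff_mul_X_pow']
    congr 1
    split_ifs with hjq
    · rw [coeff_one_sub_pow_s17]
    · rfl
  -- chi in terms of the f-vector
  have hchi' : chi - 1 = -∑ j ∈ range (n+1), (-1:ℚ)^j *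
      ((Finset.univ.filter (fun I : α => rank I = j)).card : ℚ) := by
    rw [Finset.sum_range_succ'
      (fun j => (-1:ℚ)^j * ((Finset.univ.filter (fun I : α => rank I = j)).card : ℚ)) n]
    have h0 : ((Finset.univ.filter (fun I : α => rank I = 0)).card : ℚ) = 1 := by
      rw [hf0]; simp
    have hneg : ∑ i ∈ range n, (-1:ℚ)^(i+1) *
        ((Finset.univ.filter (fun I : α => rank I = i + 1)).card : ℚ) = -chi := by
      rw [hchi, ← Finset.sum_neg_distrib]
      refine Finset.sum_congr rfl fun i _ => ?_
      rw [pow_succ]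
      ring
    rw [hneg, pow_zero, one_mul, h0]
    ring
  -- rewrite the left-hand side via sum_b_eq
  have hstep : ∀ p ∈ range n,
      (-1 : ℚ) ^ p * (p.choose q : ℚ) *
          (∑ I ∈ Finset.univ.filter (fun I : α => rank I = (n - p - 1) + 1),
            (b I ((n : ℤ) - (rank I : ℤ) - 1) : ℚ))
      = ∑ j ∈ range (n+1), (-1:ℚ)^p * (p.choose q : ℚ) *
          ((-1:ℚ)^(n-j) * ((j.choose (n-p) : ℕ) : ℚ) *
            ((Finset.univ.filter (fun I : α => rank I = j)).card : ℚ)) := by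
    intro p hp
    rw [Finset.mem_range] at hp
    have e1 : n - p - 1 + 1 = n - p := by omega
    rw [e1]
    rw [sum_b_eq rank bot hbot hrankbot hbool hmono n hdim b hBuch hEuler (n-p)
      (by omega) (by omega)]
    rw [Finset.mul_sum]
  rw [Finset.sum_congr rfl hstep, Finset.sum_comm]
  rw [hchi', hh, neg_mul, Finset.sum_mul, Finset.mul_sum, ← Finset.sum_neg_distrib,
    ← Finset.sum_add_distrib]
  refine Finset.sum_congr rfl fun j hj => ?_
  rw [Finset.mem_range] at hj
  have hpull : ∑ p ∈ range n, (-1:ℚ)^p * (p.choose q : ℚ) *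
        ((-1:ℚ)^(n-j) * ((j.choose (n-p) : ℕ) : ℚ) *
          ((Finset.univ.filter (fun I : α => rank I = j)).card : ℚ))
      = (∑ p ∈ range n, (-1:ℚ)^p * (p.choose q : ℚ) *
          ((-1:ℚ)^(n-j) * ((j.choose (n-p) : ℕ) : ℚ))) *
        ((Finset.univ.filter (fun I : α => rank I = j)).card : ℚ) := by
    rw [Finset.sum_mul]
    exact Finset.sum_congr rfl fun p _ => by ring
  rw [hpull, core_j n q j (by omega) hq]
  ring
end
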